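/- arXiv:1501.00616 — 10 statements merged into one kernel-verified Lean document; each statement's English description precedes it below -/
import Mathlib

section
/- Suppose that equations (E1) and (E2) hold at every point of U with r ≠ 0. Then at every such point one has the conservation law ∂_t( r e^{β} 𝐞 ) = ∂_r( r e^{α} 𝐦 ) (note r e^{α} 𝐦 = r e^{−β} ∂_t φ ∂_r φ); that is, the energy current P_T := −e^{−α} 𝐞 ∂_t + e^{−β} 𝐦 ∂_r is divergence free. -/
open Real

/-- Partial derivative in the time variable `t`. -/
noncomputable def pdt (f : ℝ → ℝ → ℝ) (t r : ℝ) : ℝ := deriv (fun t' => f t' r) t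

/-- Partial derivative in the radial variable `r`. -/
noncomputable def pdr (f : ℝ → ℝ → ℝ) (t r : ℝ) : ℝ := deriv (fun r' => f t r') r

/-- The energy density 𝐞. -/
noncomputable def eDen (g : ℝ → ℝ) (α β φ : ℝ → ℝ → ℝ) (t r : ℝ) : ℝ :=
  (1 / 2) * (exp (-(2 * α t r)) * (pdt φ t r) ^ 2 + exp (-(2 * β t r)) * (pdr φ t r) ^ 2
    + (g (φ t r)) ^ 2 / r ^ 2)

/-- The momentum density 𝐦. -/
noncomputable def mDen (α β φ : ℝ → ℝ → ℝ) (t r : ℝ) : ℝ :=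
  exp (-(α t r + β t r)) * pdt φ t r * pdr φ t r

section aux

/-- slice derivative in first variable equals fderiv applied to (1,0) -/
lemma hasDerivAt_slice_t (F : ℝ × ℝ → ℝ) (p : ℝ × ℝ) (h : DifferentiableAt ℝ F p) :
    HasDerivAt (fun t' => F (t', p.2)) (fderiv ℝ F p (1, 0)) p.1 := by
  have hline : HasDerivAt (fun t' : ℝ => ((t', p.2) : ℝ × ℝ)) ((1 : ℝ), (0 : ℝ)) p.1 :=
    HasDerivAt.prodMk (hasDerivAt_id p.1) (hasDerivAt_const p.1 p.2)
  exact h.hasFDerivAt.comp_hasDerivAt p.1 hline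

lemma hasDerivAt_slice_r (F : ℝ × ℝ → ℝ) (p : ℝ × ℝ) (h : DifferentiableAt ℝ F p) :
    HasDerivAt (fun r' => F (p.1, r')) (fderiv ℝ F p (0, 1)) p.2 := by
  have hline : HasDerivAt (fun r' : ℝ => ((p.1, r') : ℝ × ℝ)) ((0 : ℝ), (1 : ℝ)) p.2 :=
    HasDerivAt.prodMk (hasDerivAt_const p.2 p.1) (hasDerivAt_id p.2)
  exact h.hasFDerivAt.comp_hasDerivAt p.2 hline

end aux

/-- If the Einstein equations (E1) and (E2) hold at every point of `U` with `r ≠ 0`, then the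
conservation law `∂_t (r e^β 𝐞) = ∂_r (r e^α 𝐦)` holds at every such point, i.e. the energy
current `P_T = −e^{−α} 𝐞 ∂_t + e^{−β} 𝐦 ∂_r` is divergence free. -/
theorem energy_current_divergence_free
    (κ : ℝ) (hκ : 0 < κ)
    (g : ℝ → ℝ) (hg : ContDiff ℝ 1 g)
    (U : Set (ℝ × ℝ)) (hU : IsOpen U)
    (α β φ : ℝ → ℝ → ℝ)
    (hα : ContDiffOn ℝ 2 (fun p : ℝ × ℝ => α p.1 p.2) U)
    (hβ : ContDiffOn ℝ 2 (fun p : ℝ × ℝ => β p.1 p.2) U)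
    (hφ : ContDiffOn ℝ 2 (fun p : ℝ × ℝ => φ p.1 p.2) U)
    (hE1 : ∀ t r : ℝ, (t, r) ∈ U → r ≠ 0 →
      pdr β t r = (κ / 2) * r * exp (2 * β t r) *
        (exp (-(2 * α t r)) * (pdt φ t r) ^ 2 + exp (-(2 * β t r)) * (pdr φ t r) ^ 2
          + (g (φ t r)) ^ 2 / r ^ 2))
    (hE2 : ∀ t r : ℝ, (t, r) ∈ U → r ≠ 0 →
      pdt β t r = κ * r * pdt φ t r * pdr φ t r) :
    ∀ t r : ℝ, (t, r) ∈ U → r ≠ 0 →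
      pdt (fun t' r' => r' * exp (β t' r') * eDen g α β φ t' r') t r
        = pdr (fun t' r' => r' * exp (α t' r') * mDen α β φ t' r') t r := by
  intro t r hp hr
  set B : ℝ × ℝ → ℝ := fun p => β p.1 p.2 with hB
  have hκ' : κ ≠ 0 := ne_of_gt hκ
  -- β is C² at all points of U
  have hBat : ∀ p ∈ U, ContDiffAt ℝ 2 B p := fun p hpU => hβ.contDiffAt (hU.mem_nhds hpU)
  -- differentiability facts
  have hBdiff : ∀ p ∈ U, DifferentiableAt ℝ B p := fun p hpU =>
    (hBat p hpU).differentiableAt (by norm_num)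
  have hB'diff : ∀ p ∈ U, DifferentiableAt ℝ (fderiv ℝ B) p := fun p hpU =>
    ((hBat p hpU).fderiv_right (m := 1) (by norm_num)).differentiableAt (by norm_num)
  -- relate pdt/pdr of β to fderiv of B
  have hpdt : ∀ p ∈ U, pdt β p.1 p.2 = fderiv ℝ B p (1, 0) := fun p hpU =>
    (hasDerivAt_slice_t B p (hBdiff p hpU)).deriv
  have hpdr : ∀ p ∈ U, pdr β p.1 p.2 = fderiv ℝ B p (0, 1) := fun p hpU =>
    (hasDerivAt_slice_r B p (hBdiff p hpU)).deriv
  -- LHS: eventually, the slice function equals exp(-β) * (fderiv B) (0,1) / κ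
  have hmemT : ∀ᶠ t' in nhds t, (t', r) ∈ U :=
    (continuous_id.prodMk continuous_const).continuousAt.preimage_mem_nhds (hU.mem_nhds hp)
  have hmemR : ∀ᶠ r' in nhds r, (t, r') ∈ U ∧ r' ≠ 0 := by
    filter_upwards [(continuous_const.prodMk continuous_id).continuousAt.preimage_mem_nhds
      (hU.mem_nhds hp), isOpen_ne.mem_nhds hr] with r' h1 h2
    exact ⟨h1, h2⟩
  have heqT : (fun t' => r * exp (β t' r) * eDen g α β φ t' r)
      =ᶠ[nhds t] (fun t' => exp (-(B (t', r))) * fderiv ℝ B (t', r) (0, 1) / κ) := by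
    filter_upwards [hmemT] with t' hmem
    have h1 := hE1 t' r hmem hr
    rw [← hpdr (t', r) hmem] at *
    rw [eDen, h1]
    have e2 : exp (2 * β t' r) = exp (β t' r) * exp (β t' r) := by
      rw [← exp_add]; ring_nf
    have em : exp (-(B (t', r))) = (exp (β t' r))⁻¹ := by rw [exp_neg]
    rw [e2, em]
    field_simp
  -- RHS: eventually, the slice function equals exp(-β) * (fderiv B) (1,0) / κ
  have heqR : (fun r' => r' * exp (α t r') * mDen α β φ t r')
      =ᶠ[nhds r] (fun r' => exp (-(B (t, r'))) * fderiv ℝ B (t, r') (1, 0) / κ) := by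
    filter_upwards [hmemR] with r' ⟨hmem, hr'⟩
    have h2 := hE2 t r' hmem hr'
    rw [← hpdt (t, r') hmem] at *
    rw [mDen, h2]
    have em : exp (-(B (t, r'))) = (exp (β t r'))⁻¹ := by rw [exp_neg]
    have ea : exp (-(α t r' + β t r')) = (exp (α t r'))⁻¹ * (exp (β t r'))⁻¹ := by
      rw [neg_add, exp_add, exp_neg, exp_neg]
    rw [em, ea]
    field_simp
  -- derivative computations
  have hB1 : HasDerivAt (fun t' => B (t', r)) (fderiv ℝ B (t, r) (1, 0)) t :=
    hasDerivAt_slice_t B (t, r) (hBdiff (t, r) hp)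
  have hB2 : HasDerivAt (fun r' => B (t, r')) (fderiv ℝ B (t, r) (0, 1)) r :=
    hasDerivAt_slice_r B (t, r) (hBdiff (t, r) hp)
  have hFd : HasFDerivAt (fderiv ℝ B) (fderiv ℝ (fderiv ℝ B) (t, r)) (t, r) :=
    (hB'diff (t, r) hp).hasFDerivAt
  have hsnd_t : HasDerivAt (fun t' => fderiv ℝ B (t', r) (0, 1))
      (fderiv ℝ (fderiv ℝ B) (t, r) (1, 0) (0, 1)) t := by
    have h1 : HasFDerivAt (fun p => fderiv ℝ B p (0, 1))
        ((ContinuousLinearMap.apply ℝ ℝ ((0 : ℝ), (1 : ℝ))).comp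
          (fderiv ℝ (fderiv ℝ B) (t, r))) (t, r) :=
      (ContinuousLinearMap.apply ℝ ℝ ((0 : ℝ), (1 : ℝ))).hasFDerivAt.comp (t, r) hFd
    exact h1.comp_hasDerivAt t (HasDerivAt.prodMk (hasDerivAt_id t) (hasDerivAt_const t r))
  have hsnd_r : HasDerivAt (fun r' => fderiv ℝ B (t, r') (1, 0))
      (fderiv ℝ (fderiv ℝ B) (t, r) (0, 1) (1, 0)) r := by
    have h1 : HasFDerivAt (fun p => fderiv ℝ B p (1, 0))
        ((ContinuousLinearMap.apply ℝ ℝ ((1 : ℝ), (0 : ℝ))).comp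
          (fderiv ℝ (fderiv ℝ B) (t, r))) (t, r) :=
      (ContinuousLinearMap.apply ℝ ℝ ((1 : ℝ), (0 : ℝ))).hasFDerivAt.comp (t, r) hFd
    exact h1.comp_hasDerivAt r (HasDerivAt.prodMk (hasDerivAt_const r t) (hasDerivAt_id r))
  have hDT : HasDerivAt (fun t' => exp (-(B (t', r))) * fderiv ℝ B (t', r) (0, 1) / κ)
      ((exp (-(B (t, r))) * -fderiv ℝ B (t, r) (1, 0) * fderiv ℝ B (t, r) (0, 1)
        + exp (-(B (t, r))) * fderiv ℝ (fderiv ℝ B) (t, r) (1, 0) (0, 1)) / κ) t :=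
    (hB1.neg.exp.mul hsnd_t).div_const κ
  have hDR : HasDerivAt (fun r' => exp (-(B (t, r'))) * fderiv ℝ B (t, r') (1, 0) / κ)
      ((exp (-(B (t, r))) * -fderiv ℝ B (t, r) (0, 1) * fderiv ℝ B (t, r) (1, 0)
        + exp (-(B (t, r))) * fderiv ℝ (fderiv ℝ B) (t, r) (0, 1) (1, 0)) / κ) r :=
    (hB2.neg.exp.mul hsnd_r).div_const κ
  have hSym : fderiv ℝ (fderiv ℝ B) (t, r) (1, 0) (0, 1)
      = fderiv ℝ (fderiv ℝ B) (t, r) (0, 1) (1, 0) :=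
    ((hBat (t, r) hp).isSymmSndFDerivAt (by norm_num)).eq _ _
  rw [pdt, pdr, heqT.deriv_eq, heqR.deriv_eq, hDT.deriv, hDR.deriv, hSym]
  ring
end

section
/- Let κ > 0, R > 0, and let P, Q, G : [0,R] → ℝ be continuous and nonnegative. Let β, α : [0,R] → ℝ be C¹ with β(0) = α(0) = 0, β′(r) = (κ/2) r e^{2β(r)}(P(r)+Q(r)+G(r)) and α′(r) = (κ/2) r e^{2β(r)}(P(r)+Q(r)−G(r)) for all r ∈ [0,R]. Then for every r ∈ [0,R]: (i) e^{−β(r)} = 1 − (κ/2)∫_0^r s e^{β(s)}(P(s)+Q(s)+G(s)) ds; (ii) β is nondecreasing, so 0 ≤ β(r) ≤ β(R); (iii) −(κ/2)∫_0^r s e^{2β(s)} G(s) ds ≤ α(r) ≤ (κ/2)∫_0^r s e^{2β(s)}(P(s)+Q(s)) ds. -/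
open Real

/-- Uniform bounds on the metric coefficients on a fixed time slice: with
`β′(r) = (κ/2) r e^{2β}(P+Q+G)`, `α′(r) = (κ/2) r e^{2β}(P+Q−G)`, `β(0) = α(0) = 0`, and
`P, Q, G ≥ 0`, one gets the integral identity for `e^{−β}`, monotonicity of `β` with
`0 ≤ β(r) ≤ β(R)`, and two-sided integral bounds on `α`. -/
theorem metric_coefficient_bounds
    (κ R : ℝ) (hκ : 0 < κ) (hR : 0 < R)
    (P Q G : ℝ → ℝ)
    (hPc : ContinuousOn P (Set.Icc 0 R))
    (hQc : ContinuousOn Q (Set.Icc 0 R))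
    (hGc : ContinuousOn G (Set.Icc 0 R))
    (hPnn : ∀ r ∈ Set.Icc (0:ℝ) R, 0 ≤ P r)
    (hQnn : ∀ r ∈ Set.Icc (0:ℝ) R, 0 ≤ Q r)
    (hGnn : ∀ r ∈ Set.Icc (0:ℝ) R, 0 ≤ G r)
    (β α : ℝ → ℝ)
    (hβ0 : β 0 = 0) (hα0 : α 0 = 0)
    (hβ' : ∀ r ∈ Set.Icc (0:ℝ) R,
      HasDerivWithinAt β ((κ / 2) * r * exp (2 * β r) * (P r + Q r + G r)) (Set.Icc 0 R) r)
    (hα' : ∀ r ∈ Set.Icc (0:ℝ) R,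
      HasDerivWithinAt α ((κ / 2) * r * exp (2 * β r) * (P r + Q r - G r)) (Set.Icc 0 R) r) :
    ∀ r ∈ Set.Icc (0:ℝ) R,
      (exp (-β r) = 1 - (κ / 2) * ∫ s in (0:ℝ)..r, s * exp (β s) * (P s + Q s + G s))
      ∧ (MonotoneOn β (Set.Icc 0 R) ∧ 0 ≤ β r ∧ β r ≤ β R)
      ∧ (-((κ / 2) * ∫ s in (0:ℝ)..r, s * exp (2 * β s) * G s) ≤ α r
          ∧ α r ≤ (κ / 2) * ∫ s in (0:ℝ)..r, s * exp (2 * β s) * (P s + Q s)) := by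
  have hβc : ContinuousOn β (Set.Icc 0 R) := fun x hx => (hβ' x hx).continuousWithinAt
  have hαc : ContinuousOn α (Set.Icc 0 R) := fun x hx => (hα' x hx).continuousWithinAt
  -- monotonicity of β
  have hmono : MonotoneOn β (Set.Icc 0 R) := by
    apply monotoneOn_of_deriv_nonneg (convex_Icc 0 R) hβc
    · intro x hx
      rw [interior_Icc] at hx
      exact ((hβ' x (Set.mem_Icc_of_Ioo hx)).hasDerivAt
        (Icc_mem_nhds hx.1 hx.2)).differentiableAt.differentiableWithinAt
    · intro x hx
      rw [interior_Icc] at hx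
      have hx' := Set.mem_Icc_of_Ioo hx
      rw [((hβ' x hx').hasDerivAt (Icc_mem_nhds hx.1 hx.2)).deriv]
      have h1 : 0 ≤ P x + Q x + G x := by
        have := hPnn x hx'; have := hQnn x hx'; have := hGnn x hx'; linarith
      have h2 : 0 < exp (2 * β x) := exp_pos _
      have h3 : 0 ≤ κ / 2 * x := mul_nonneg (by positivity) hx.1.le
      exact mul_nonneg (mul_nonneg h3 h2.le) h1
  intro r hr
  obtain ⟨hr0, hrR⟩ := hr
  have hsub : Set.Icc (0:ℝ) r ⊆ Set.Icc 0 R := Set.Icc_subset_Icc le_rfl hrR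
  have hmem : ∀ x ∈ Set.Icc (0:ℝ) r, x ∈ Set.Icc (0:ℝ) R := fun x hx => hsub hx
  have hβcr : ContinuousOn β (Set.Icc 0 r) := hβc.mono hsub
  -- helper for deriv within Ioi
  have hmemIoi : ∀ x ∈ Set.Ico (0:ℝ) r, Set.Icc (0:ℝ) R ∈ nhdsWithin x (Set.Ioi x) := by
    intro x hx
    exact Icc_mem_nhdsGT_of_mem ⟨hx.1, lt_of_lt_of_le hx.2 hrR⟩
  have hint : ∀ (f : ℝ → ℝ), ContinuousOn f (Set.Icc 0 r) →
      IntervalIntegrable f MeasureTheory.volume 0 r :=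
    fun f hf => hf.intervalIntegrable_of_Icc hr0
  have hcexp : ContinuousOn (fun s => exp (2 * β s)) (Set.Icc 0 r) :=
    Real.continuous_exp.comp_continuousOn (continuousOn_const.mul hβcr)
  have hcexp1 : ContinuousOn (fun s => exp (β s)) (Set.Icc 0 r) :=
    Real.continuous_exp.comp_continuousOn hβcr
  -- (i) the integral identity for exp (-β)
  have hkey : (∫ s in (0:ℝ)..r, -((κ / 2) * s * exp (β s) * (P s + Q s + G s)))
      = exp (-β r) - exp (-β 0) := by
    apply intervalIntegral.integral_eq_sub_of_hasDeriv_right_of_le hr0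
    · exact Real.continuous_exp.comp_continuousOn hβcr.neg
    · intro x hx
      have hx' : x ∈ Set.Icc (0:ℝ) R := hmem x ⟨hx.1.le, hx.2.le⟩
      have hd := (((hβ' x hx').mono_of_mem_nhdsWithin (hmemIoi x ⟨hx.1.le, hx.2⟩)).neg).exp
      refine hd.congr_deriv ?_
      have he : exp (β x) = exp (-β x) * exp (2 * β x) := by
        rw [← exp_add]; ring_nf
      rw [he, Pi.neg_apply]; ring
    · apply hint
      exact (((continuousOn_const.mul continuousOn_id).mul hcexp1).mul
        (((hPc.mono hsub).add (hQc.mono hsub)).add (hGc.mono hsub))).neg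
  have hid : exp (-β r) = 1 - (κ / 2) * ∫ s in (0:ℝ)..r, s * exp (β s) * (P s + Q s + G s) := by
    have hneg : (∫ s in (0:ℝ)..r, -((κ / 2) * s * exp (β s) * (P s + Q s + G s)))
        = -((κ / 2) * ∫ s in (0:ℝ)..r, s * exp (β s) * (P s + Q s + G s)) := by
      rw [intervalIntegral.integral_neg]
      congr 1
      rw [← intervalIntegral.integral_const_mul]
      congr 1; funext s; ring
    rw [hβ0, neg_zero, exp_zero] at hkey
    rw [hneg] at hkey
    linarith
  refine ⟨hid, ⟨hmono, ?_, ?_⟩, ?_⟩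
  · have := hmono (Set.left_mem_Icc.2 hR.le) ⟨hr0, hrR⟩ hr0
    rwa [hβ0] at this
  · exact hmono ⟨hr0, hrR⟩ (Set.right_mem_Icc.2 hR.le) hrR
  -- (iii) bounds on α
  · have hαkey : (∫ s in (0:ℝ)..r, (κ / 2) * s * exp (2 * β s) * (P s + Q s - G s))
        = α r - α 0 := by
      apply intervalIntegral.integral_eq_sub_of_hasDeriv_right_of_le hr0
      · exact hαc.mono hsub
      · intro x hx
        exact (hα' x (hmem x ⟨hx.1.le, hx.2.le⟩)).mono_of_mem_nhdsWithin (hmemIoi x ⟨hx.1.le, hx.2⟩)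
      · apply hint
        exact ((continuousOn_const.mul continuousOn_id).mul hcexp).mul
          (((hPc.mono hsub).add (hQc.mono hsub)).sub (hGc.mono hsub))
    rw [hα0, sub_zero] at hαkey
    have hintα : IntervalIntegrable (fun s => (κ / 2) * s * exp (2 * β s) * (P s + Q s - G s))
        MeasureTheory.volume 0 r := by
      apply hint
      exact ((continuousOn_const.mul continuousOn_id).mul hcexp).mul
        (((hPc.mono hsub).add (hQc.mono hsub)).sub (hGc.mono hsub))
    constructor
    · -- lower bound
      have hle : ∀ s ∈ Set.Icc (0:ℝ) r, -((κ / 2) * (s * exp (2 * β s) * G s))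
          ≤ (κ / 2) * s * exp (2 * β s) * (P s + Q s - G s) := by
        intro s hs
        have hs' := hmem s hs
        have hP := hPnn s hs'; have hQ := hQnn s hs'
        have h2 : (0:ℝ) < exp (2 * β s) := exp_pos _
        have key : 0 ≤ κ / 2 * s * exp (2 * β s) * (P s + Q s) :=
          mul_nonneg (mul_nonneg (mul_nonneg (by positivity) hs.1) h2.le) (add_nonneg hP hQ)
        nlinarith [key]
      have hintL : IntervalIntegrable (fun s => -(κ / 2 * (s * exp (2 * β s) * G s)))
          MeasureTheory.volume 0 r := by
        apply hint
        exact (continuousOn_const.mul ((continuousOn_id.mul hcexp).mul (hGc.mono hsub))).neg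
      have := intervalIntegral.integral_mono_on hr0 hintL hintα hle
      calc -((κ / 2) * ∫ s in (0:ℝ)..r, s * exp (2 * β s) * G s)
          = ∫ s in (0:ℝ)..r, -((κ / 2) * (s * exp (2 * β s) * G s)) := by
            rw [intervalIntegral.integral_neg, intervalIntegral.integral_const_mul]
        _ ≤ ∫ s in (0:ℝ)..r, (κ / 2) * s * exp (2 * β s) * (P s + Q s - G s) := this
        _ = α r := hαkey
    · -- upper bound
      have hle : ∀ s ∈ Set.Icc (0:ℝ) r, (κ / 2) * s * exp (2 * β s) * (P s + Q s - G s)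
          ≤ (κ / 2) * (s * exp (2 * β s) * (P s + Q s)) := by
        intro s hs
        have hs' := hmem s hs
        have hG := hGnn s hs'
        have h2 : (0:ℝ) < exp (2 * β s) := exp_pos _
        have key : 0 ≤ κ / 2 * s * exp (2 * β s) * G s :=
          mul_nonneg (mul_nonneg (mul_nonneg (by positivity) hs.1) h2.le) hG
        nlinarith [key]
      have hintU : IntervalIntegrable (fun s => (κ / 2) * (s * exp (2 * β s) * (P s + Q s)))
          MeasureTheory.volume 0 r := by
        apply hint
        exact continuousOn_const.mul ((continuousOn_id.mul hcexp).mul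
          ((hPc.mono hsub).add (hQc.mono hsub)))
      have := intervalIntegral.integral_mono_on hr0 hintα hintU hle
      calc α r = ∫ s in (0:ℝ)..r, (κ / 2) * s * exp (2 * β s) * (P s + Q s - G s) := hαkey.symm
        _ ≤ ∫ s in (0:ℝ)..r, (κ / 2) * (s * exp (2 * β s) * (P s + Q s)) := this
        _ = (κ / 2) * ∫ s in (0:ℝ)..r, s * exp (2 * β s) * (P s + Q s) := by
            rw [intervalIntegral.integral_const_mul]
end

section
/- Let g : ℝ → ℝ be continuous with ∫_0^y g(s) ds → ∞ as y → ∞, and let E ≥ 0. Then there exists a constant c, depending only on g and E, with the following property: for every C¹ function φ : [0,∞) → [0,∞) with φ(0) = 0 and every continuous β : [0,∞) → ℝ such that the improper integrals satisfy ∫_0^∞ (g(φ(s))²/s) e^{β(s)} ds ≤ E and ∫_0^∞ e^{−β(s)} φ′(s)² s ds ≤ E, one has ∫_0^{φ(r)} g(s) ds ≤ E for every r ≥ 0, and consequently φ(r) ≤ c for every r ≥ 0. -/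
open Real MeasureTheory

/-- Uniform bound on the wave-map profile: if `℘(y) = ∫_0^y g → ∞` as `y → ∞` and `E ≥ 0`,
there is a constant `c` depending only on `g` and `E` such that for every nonnegative C¹
profile `φ` vanishing on the axis whose potential energies are bounded by `E`, one has
`∫_0^{φ(r)} g ≤ E` and `φ(r) ≤ c` for all `r ≥ 0`. -/
theorem phi_uniform_bound
    (g : ℝ → ℝ) (hg : Continuous g)
    (hg_inf : Filter.Tendsto (fun y => ∫ s in (0:ℝ)..y, g s) Filter.atTop Filter.atTop)
    (E : ℝ) (hE : 0 ≤ E) :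
    ∃ c : ℝ, ∀ φ β : ℝ → ℝ,
      ContDiffOn ℝ 1 φ (Set.Ici 0) →
      (∀ s ∈ Set.Ici (0:ℝ), 0 ≤ φ s) →
      φ 0 = 0 →
      ContinuousOn β (Set.Ici 0) →
      IntegrableOn (fun s => (g (φ s)) ^ 2 / s * exp (β s)) (Set.Ioi 0) →
      (∫ s in Set.Ioi (0:ℝ), (g (φ s)) ^ 2 / s * exp (β s)) ≤ E →
      IntegrableOn (fun s => exp (-β s) * (deriv φ s) ^ 2 * s) (Set.Ioi 0) →
      (∫ s in Set.Ioi (0:ℝ), exp (-β s) * (deriv φ s) ^ 2 * s) ≤ E →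
      ∀ r : ℝ, 0 ≤ r → (∫ s in (0:ℝ)..(φ r), g s) ≤ E ∧ φ r ≤ c := by
  -- choose c
  obtain ⟨c₀, hc₀⟩ := (Filter.eventually_atTop).1 (hg_inf.eventually_ge_atTop (E + 1))
  refine ⟨max c₀ 0, ?_⟩
  intro φ β hφ hφ0 hφax hβ hint1 hE1 hint2 hE2 r hr
  -- Main claim: ∫_0^{φ r} g ≤ E
  have main : (∫ s in (0:ℝ)..(φ r), g s) ≤ E := by
    set P : ℝ → ℝ := fun y => ∫ s in (0:ℝ)..y, g s with hP
    have hPderiv : ∀ x : ℝ, HasDerivAt P (g x) x := fun x =>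
      (hg.integral_hasStrictDerivAt 0 x).hasDerivAt
    -- φ differentiable at interior points
    have hφdiff : ∀ x ∈ Set.Ioi (0:ℝ), DifferentiableAt ℝ φ x := by
      intro x hx
      have := (hφ.differentiableOn one_ne_zero) x (Set.mem_Ici.2 (le_of_lt (Set.mem_Ioi.1 hx)))
      exact this.differentiableAt (Ici_mem_nhds hx)
    have hφderiv : ∀ x ∈ Set.Ioi (0:ℝ),
        HasDerivAt (fun s => P (φ s)) (g (φ x) * deriv φ x) x := by
      intro x hx
      exact (hPderiv (φ x)).comp x ((hφdiff x hx).hasDerivAt)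
    -- derivWithin version for continuity
    have hψcont : ContinuousOn (derivWithin φ (Set.Ici 0)) (Set.Ici 0) :=
      hφ.continuousOn_derivWithin (uniqueDiffOn_Ici 0) le_rfl
    have hψeq : ∀ x ∈ Set.Ioi (0:ℝ), derivWithin φ (Set.Ici 0) x = deriv φ x := by
      intro x hx
      exact derivWithin_of_mem_nhds (Ici_mem_nhds hx)
    -- interval integrability of s ↦ g (φ s) * deriv φ s on [0, r]
    have hφcont : ContinuousOn φ (Set.Ici 0) := hφ.continuousOn
    have hfcont : ContinuousOn (fun s => g (φ s) * derivWithin φ (Set.Ici 0) s)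
        (Set.Ici 0) := (hg.comp_continuousOn hφcont).mul hψcont
    have hIoc : Set.Ioc (0:ℝ) r ⊆ Set.Ici 0 := fun x hx => le_of_lt hx.1
    have hIocIoi : Set.Ioc (0:ℝ) r ⊆ Set.Ioi 0 := fun x hx => hx.1
    have hintf : IntegrableOn (fun s => g (φ s) * deriv φ s) (Set.Ioc 0 r) := by
      have h1 : IntegrableOn (fun s => g (φ s) * derivWithin φ (Set.Ici 0) s)
          (Set.Ioc 0 r) := by
        have hIcc : IntegrableOn (fun s => g (φ s) * derivWithin φ (Set.Ici 0) s)
            (Set.Icc 0 r) volume :=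
          (hfcont.mono Set.Icc_subset_Ici_self).integrableOn_compact isCompact_Icc
        exact hIcc.mono_set Set.Ioc_subset_Icc_self
      exact h1.congr_fun (fun x hx => by dsimp only; rw [hψeq x (hIocIoi hx)]) measurableSet_Ioc
    have hII : IntervalIntegrable (fun s => g (φ s) * deriv φ s) volume 0 r :=
      (intervalIntegrable_iff_integrableOn_Ioc_of_le hr).2 hintf
    -- FTC
    have hPφcont : ContinuousOn (fun s => P (φ s)) (Set.Icc 0 r) := by
      have hPc : Continuous P :=
        continuous_iff_continuousAt.2 fun x => (hPderiv x).continuousAt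
      exact hPc.comp_continuousOn (hφcont.mono (Set.Icc_subset_Ici_self))
    have hFTC : (∫ s in (0:ℝ)..r, g (φ s) * deriv φ s) = P (φ r) - P (φ 0) :=
      intervalIntegral.integral_eq_sub_of_hasDerivAt_of_le hr hPφcont
        (fun x hx => hφderiv x hx.1) hII
    have hP0 : P (φ 0) = 0 := by simp [hP, hφax]
    -- pointwise bound
    set h1 : ℝ → ℝ := fun s => (g (φ s)) ^ 2 / s * exp (β s) with hh1
    set h2 : ℝ → ℝ := fun s => exp (-β s) * (deriv φ s) ^ 2 * s with hh2
    have hpt : ∀ x ∈ Set.Ioc (0:ℝ) r,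
        g (φ x) * deriv φ x ≤ (h1 x + h2 x) / 2 := by
      intro x hx
      have hxpos : 0 < x := hx.1
      set u := g (φ x); set v := deriv φ x
      set A := exp (β x) / x with hA
      set B := x * exp (-β x) with hB
      have hA0 : 0 ≤ A := le_of_lt (div_pos (exp_pos _) hxpos)
      have hB0 : 0 ≤ B := le_of_lt (mul_pos hxpos (exp_pos _))
      have hsa : Real.sqrt A ^ 2 = A := Real.sq_sqrt hA0
      have hsb : Real.sqrt B ^ 2 = B := Real.sq_sqrt hB0
      have hab : Real.sqrt A * Real.sqrt B = 1 := by
        rw [← Real.sqrt_mul hA0]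
        have : A * B = 1 := by
          have hx0 : x ≠ 0 := ne_of_gt hxpos
          rw [hA, hB, Real.exp_neg]
          field_simp
        rw [this, Real.sqrt_one]
      have key : 2 * (u * v) ≤ u ^ 2 * A + v ^ 2 * B := by
        have hexp : u ^ 2 * A - 2 * (u * v) + v ^ 2 * B
            = (u * Real.sqrt A - v * Real.sqrt B) ^ 2 := by
          have h' : (u * Real.sqrt A - v * Real.sqrt B) ^ 2
              = u ^ 2 * (Real.sqrt A ^ 2) - 2 * (u * v) * (Real.sqrt A * Real.sqrt B)
                + v ^ 2 * (Real.sqrt B ^ 2) := by ring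
          rw [h', hsa, hsb, hab]; ring
        nlinarith [sq_nonneg (u * Real.sqrt A - v * Real.sqrt B), hexp]
      have hh1x : h1 x = u ^ 2 * A := by rw [hh1]; simp only []; rw [hA]; ring
      have hh2x : h2 x = v ^ 2 * B := by rw [hh2]; simp only []; rw [hB]; ring
      rw [hh1x, hh2x]; linarith
    -- integral comparison
    have hH : IntegrableOn (fun s => (h1 s + h2 s) / 2) (Set.Ioc 0 r) :=
      (((hint1.mono_set hIocIoi).add (hint2.mono_set hIocIoi)).div_const 2)
    have hmono : (∫ s in Set.Ioc (0:ℝ) r, g (φ s) * deriv φ s)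
        ≤ ∫ s in Set.Ioc (0:ℝ) r, (h1 s + h2 s) / 2 :=
      setIntegral_mono_on hintf hH measurableSet_Ioc hpt
    have h1nn : ∀ᵐ s ∂(volume.restrict (Set.Ioi (0:ℝ))), 0 ≤ h1 s := by
      refine (ae_restrict_iff' measurableSet_Ioi).2 (Filter.Eventually.of_forall ?_)
      intro s hs
      exact mul_nonneg (div_nonneg (sq_nonneg _) (le_of_lt hs)) (le_of_lt (exp_pos _))
    have h2nn : ∀ᵐ s ∂(volume.restrict (Set.Ioi (0:ℝ))), 0 ≤ h2 s := by
      refine (ae_restrict_iff' measurableSet_Ioi).2 (Filter.Eventually.of_forall ?_)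
      intro s hs
      exact mul_nonneg (mul_nonneg (le_of_lt (exp_pos _)) (sq_nonneg _)) (le_of_lt hs)
    have hsub : (Set.Ioc (0:ℝ) r : Set ℝ) ≤ᵐ[volume] Set.Ioi 0 :=
      HasSubset.Subset.eventuallyLE hIocIoi
    have hm1 : (∫ s in Set.Ioc (0:ℝ) r, h1 s) ≤ ∫ s in Set.Ioi (0:ℝ), h1 s :=
      setIntegral_mono_set hint1 h1nn hsub
    have hm2 : (∫ s in Set.Ioc (0:ℝ) r, h2 s) ≤ ∫ s in Set.Ioi (0:ℝ), h2 s :=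
      setIntegral_mono_set hint2 h2nn hsub
    have hsplit : (∫ s in Set.Ioc (0:ℝ) r, (h1 s + h2 s) / 2)
        = ((∫ s in Set.Ioc (0:ℝ) r, h1 s) + ∫ s in Set.Ioc (0:ℝ) r, h2 s) / 2 := by
      rw [integral_div, integral_add (hint1.mono_set hIocIoi) (hint2.mono_set hIocIoi)]
    have : P (φ r) ≤ E := by
      have hieq : (∫ s in (0:ℝ)..r, g (φ s) * deriv φ s)
          = ∫ s in Set.Ioc (0:ℝ) r, g (φ s) * deriv φ s :=
        intervalIntegral.integral_of_le hr
      calc P (φ r) = ∫ s in Set.Ioc (0:ℝ) r, g (φ s) * deriv φ s := by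
              rw [← hieq, hFTC, hP0, sub_zero]
        _ ≤ ((∫ s in Set.Ioc (0:ℝ) r, h1 s) + ∫ s in Set.Ioc (0:ℝ) r, h2 s) / 2 := by
              rw [← hsplit]; exact hmono
        _ ≤ (E + E) / 2 := by
              have := le_trans hm1 hE1; have := le_trans hm2 hE2; linarith
        _ = E := by ring
    exact this
  refine ⟨main, ?_⟩
  by_contra hcon
  push_neg at hcon
  have : E + 1 ≤ ∫ s in (0:ℝ)..(φ r), g s :=
    hc₀ (φ r) (le_of_lt (lt_of_le_of_lt (le_max_left _ _) hcon))
  linarith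
end

section
/- Suppose that (N1), (N2) and (N3) hold on U. Define the mass m := 1 + 4 Ω^{−2} ∂_u r ∂_ū r and the stress-energy components S_{uu} := (∂_uφ)², S_{ūū} := (∂_ūφ)², S_{uū} := (Ω²/4) g(φ)²/r². Then at every point of U: ∂_u m = 4κ Ω^{−2} r ( S_{uū} ∂_u r − S_{uu} ∂_ū r ) and ∂_ū m = 4κ Ω^{−2} r ( S_{uū} ∂_ū r − S_{ūū} ∂_u r ). -/
open Real

/-- Partial derivative in the null variable `u`. -/
noncomputable def pdu (f : ℝ → ℝ → ℝ) (u v : ℝ) : ℝ := deriv (fun u' => f u' v) u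

/-- Partial derivative in the null variable `ū`. -/
noncomputable def pdub (f : ℝ → ℝ → ℝ) (u v : ℝ) : ℝ := deriv (fun v' => f u v') v

/-- The mass `m = 1 + 4 Ω^{−2} ∂_u r ∂_ū r`. -/
noncomputable def mass (Ω r : ℝ → ℝ → ℝ) (u v : ℝ) : ℝ :=
  1 + 4 * ((Ω u v) ^ 2)⁻¹ * pdu r u v * pdub r u v

section aux

/-- Slice derivative in the first variable. -/
lemma hasDerivAt_slice1 {F : ℝ × ℝ → ℝ} {L : ℝ × ℝ →L[ℝ] ℝ} {u v : ℝ}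
    (h : HasFDerivAt F L (u, v)) :
    HasDerivAt (fun a => F (a, v)) (L (1, 0)) u :=
  h.comp_hasDerivAt u (HasDerivAt.prodMk (hasDerivAt_id u) (hasDerivAt_const u v))

/-- Slice derivative in the second variable. -/
lemma hasDerivAt_slice2 {F : ℝ × ℝ → ℝ} {L : ℝ × ℝ →L[ℝ] ℝ} {u v : ℝ}
    (h : HasFDerivAt F L (u, v)) :
    HasDerivAt (fun b => F (u, b)) (L (0, 1)) v :=
  h.comp_hasDerivAt v (HasDerivAt.prodMk (hasDerivAt_const v u) (hasDerivAt_id v))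

lemma pdu_eq_fderiv (f : ℝ → ℝ → ℝ) {q : ℝ × ℝ}
    (h : DifferentiableAt ℝ (fun z : ℝ × ℝ => f z.1 z.2) q) :
    pdu f q.1 q.2 = fderiv ℝ (fun z : ℝ × ℝ => f z.1 z.2) q (1, 0) := by
  obtain ⟨a, b⟩ := q
  exact (hasDerivAt_slice1 h.hasFDerivAt).deriv

lemma pdub_eq_fderiv (f : ℝ → ℝ → ℝ) {q : ℝ × ℝ}
    (h : DifferentiableAt ℝ (fun z : ℝ × ℝ => f z.1 z.2) q) :
    pdub f q.1 q.2 = fderiv ℝ (fun z : ℝ × ℝ => f z.1 z.2) q (0, 1) := by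
  obtain ⟨a, b⟩ := q
  exact (hasDerivAt_slice2 h.hasFDerivAt).deriv

end aux

/-- Given (N1), (N2), (N3) on `U`, the mass `m = 1 + 4Ω^{−2}∂_u r ∂_ū r` satisfies
`∂_u m = 4κ Ω^{−2} r (S_{uū} ∂_u r − S_{uu} ∂_ū r)` and
`∂_ū m = 4κ Ω^{−2} r (S_{uū} ∂_ū r − S_{ūū} ∂_u r)`, where `S_{uu} = (∂_uφ)²`,
`S_{ūū} = (∂_ūφ)²`, `S_{uū} = (Ω²/4) g(φ)²/r²`. -/
theorem mass_derivatives
    (κ : ℝ) (hκ : 0 < κ)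
    (g : ℝ → ℝ) (hg : ContDiff ℝ 1 g)
    (U : Set (ℝ × ℝ)) (hU : IsOpen U)
    (Ω r φ : ℝ → ℝ → ℝ)
    (hΩ : ContDiffOn ℝ 2 (fun p : ℝ × ℝ => Ω p.1 p.2) U)
    (hr : ContDiffOn ℝ 2 (fun p : ℝ × ℝ => r p.1 p.2) U)
    (hφ : ContDiffOn ℝ 2 (fun p : ℝ × ℝ => φ p.1 p.2) U)
    (hΩpos : ∀ p ∈ U, 0 < Ω p.1 p.2)
    (hrpos : ∀ p ∈ U, 0 < r p.1 p.2)
    (hN1 : ∀ u v : ℝ, (u, v) ∈ U →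
      pdu (fun u' v' => ((Ω u' v') ^ 2)⁻¹ * pdu r u' v') u v
        = -(((Ω u v) ^ 2)⁻¹ * κ * r u v * (pdu φ u v) ^ 2))
    (hN2 : ∀ u v : ℝ, (u, v) ∈ U →
      pdub (fun u' v' => ((Ω u' v') ^ 2)⁻¹ * pdub r u' v') u v
        = -(((Ω u v) ^ 2)⁻¹ * κ * r u v * (pdub φ u v) ^ 2))
    (hN3 : ∀ u v : ℝ, (u, v) ∈ U →
      pdu (pdub r) u v = κ * (Ω u v) ^ 2 * (g (φ u v)) ^ 2 / (4 * r u v)) :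
    ∀ u v : ℝ, (u, v) ∈ U →
      (pdu (mass Ω r) u v
        = 4 * κ * ((Ω u v) ^ 2)⁻¹ * r u v *
            (((Ω u v) ^ 2 / 4) * (g (φ u v)) ^ 2 / (r u v) ^ 2 * pdu r u v
              - (pdu φ u v) ^ 2 * pdub r u v))
      ∧ (pdub (mass Ω r) u v
        = 4 * κ * ((Ω u v) ^ 2)⁻¹ * r u v *
            (((Ω u v) ^ 2 / 4) * (g (φ u v)) ^ 2 / (r u v) ^ 2 * pdub r u v
              - (pdub φ u v) ^ 2 * pdu r u v)) := by
  intro u v hp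
  have hmem : U ∈ nhds (u, v) := hU.mem_nhds hp
  set R : ℝ × ℝ → ℝ := fun q => r q.1 q.2 with hRdef
  set W : ℝ × ℝ → ℝ := fun q => Ω q.1 q.2 with hWdef
  have hRp : ContDiffAt ℝ 2 R (u, v) := hr.contDiffAt hmem
  have hWp : ContDiffAt ℝ 2 W (u, v) := hΩ.contDiffAt hmem
  have hΩne : Ω u v ≠ 0 := (hΩpos (u, v) hp).ne'
  have hrne : r u v ≠ 0 := (hrpos (u, v) hp).ne'
  -- differentiability of R near (u,v)
  have hRd : ∀ᶠ q in nhds (u, v), DifferentiableAt ℝ R q := by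
    filter_upwards [hmem] with q hq
    exact (hr.differentiableOn two_ne_zero).differentiableAt (hU.mem_nhds hq)
  set D : (ℝ × ℝ) → (ℝ × ℝ) →L[ℝ] ℝ := fderiv ℝ R with hDdef
  have hD1 : ContDiffAt ℝ 1 D (u, v) := hRp.fderiv_right (by norm_num)
  have hDd : DifferentiableAt ℝ D (u, v) := hD1.differentiableAt one_ne_zero
  -- eventual identification of pdu r / pdub r with fderiv applications
  have hpdu_eq : ∀ᶠ q in nhds (u, v), pdu r q.1 q.2 = D q (1, 0) := by
    filter_upwards [hRd] with q hq
    exact pdu_eq_fderiv r hq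
  have hpdub_eq : ∀ᶠ q in nhds (u, v), pdub r q.1 q.2 = D q (0, 1) := by
    filter_upwards [hRd] with q hq
    exact pdub_eq_fderiv r hq
  -- the two slice embeddings
  have hline1 : DifferentiableAt ℝ (fun a : ℝ => ((a, v) : ℝ × ℝ)) u :=
    differentiableAt_id.prodMk (differentiableAt_const v)
  have hline2 : DifferentiableAt ℝ (fun b : ℝ => ((u, b) : ℝ × ℝ)) v :=
    (differentiableAt_const u).prodMk differentiableAt_id
  have htend1 : Filter.Tendsto (fun a : ℝ => ((a, v) : ℝ × ℝ)) (nhds u) (nhds (u, v)) :=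
    (continuous_id.prodMk continuous_const).tendsto u
  have htend2 : Filter.Tendsto (fun b : ℝ => ((u, b) : ℝ × ℝ)) (nhds v) (nhds (u, v)) :=
    (continuous_const.prodMk continuous_id).tendsto v
  -- differentiability of slices of Ω
  have hWslice1 : DifferentiableAt ℝ (fun a : ℝ => Ω a v) u :=
    by have := (hWp.differentiableAt two_ne_zero).comp u hline1; exact this
  have hWslice2 : DifferentiableAt ℝ (fun b : ℝ => Ω u b) v :=
    by have := (hWp.differentiableAt two_ne_zero).comp v hline2; exact this
  -- differentiability of evaluated fderiv maps
  have hDw : ∀ w : ℝ × ℝ, DifferentiableAt ℝ (fun q : ℝ × ℝ => D q w) (u, v) :=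
    fun w => ((hD1.clm_apply contDiffAt_const).differentiableAt one_ne_zero)
  have hDw1 : ∀ w : ℝ × ℝ, DifferentiableAt ℝ (fun a : ℝ => D (a, v) w) u :=
    fun w => by have := (hDw w).comp u hline1; exact this
  have hDw2 : ∀ w : ℝ × ℝ, DifferentiableAt ℝ (fun b : ℝ => D (u, b) w) v :=
    fun w => by have := (hDw w).comp v hline2; exact this
  -- the fderiv of q ↦ D q w
  have hDwF : ∀ w : ℝ × ℝ, HasFDerivAt (fun q : ℝ × ℝ => D q w)
      ((ContinuousLinearMap.apply ℝ ℝ w).comp (fderiv ℝ D (u, v))) (u, v) :=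
    fun w => (ContinuousLinearMap.apply ℝ ℝ w).hasFDerivAt.comp (u, v) hDd.hasFDerivAt
  -- symmetry of second derivatives
  have hsymm : ∀ z w : ℝ × ℝ, fderiv ℝ D (u, v) z w = fderiv ℝ D (u, v) w z := by
    intro z w
    refine second_derivative_symmetric_of_eventually (f := R) (f' := D) ?_ hDd.hasFDerivAt z w
    filter_upwards [hRd] with q hq
    exact hq.hasFDerivAt
  ----------------------------------------------------------------
  -- Part 1 : derivative in u
  ----------------------------------------------------------------
  -- the function a(u') = Ω(u',v)⁻² ∂_u r(u',v)
  have haeq : (fun a : ℝ => ((Ω a v) ^ 2)⁻¹ * pdu r a v)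
      =ᶠ[nhds u] (fun a : ℝ => ((Ω a v) ^ 2)⁻¹ * D (a, v) (1, 0)) := by
    filter_upwards [htend1.eventually hpdu_eq] with a ha
    rw [ha]
  have hda : DifferentiableAt ℝ (fun a : ℝ => ((Ω a v) ^ 2)⁻¹ * pdu r a v) u := by
    refine DifferentiableAt.congr_of_eventuallyEq ?_ haeq
    exact ((hWslice1.pow 2).inv (pow_ne_zero 2 hΩne)).mul (hDw1 (1, 0))
  have hderiva : deriv (fun a : ℝ => ((Ω a v) ^ 2)⁻¹ * pdu r a v) u
      = -(((Ω u v) ^ 2)⁻¹ * κ * r u v * (pdu φ u v) ^ 2) := hN1 u v hp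
  -- the function b(u') = ∂_ū r(u',v)
  have hbeq : (fun a : ℝ => pdub r a v) =ᶠ[nhds u] (fun a : ℝ => D (a, v) (0, 1)) := by
    filter_upwards [htend1.eventually hpdub_eq] with a ha
    exact ha
  have hdb : DifferentiableAt ℝ (fun a : ℝ => pdub r a v) u :=
    (hDw1 (0, 1)).congr_of_eventuallyEq hbeq
  have hderivb : deriv (fun a : ℝ => pdub r a v) u
      = κ * (Ω u v) ^ 2 * (g (φ u v)) ^ 2 / (4 * r u v) := hN3 u v hp
  -- assemble
  have hmass1 : (fun a : ℝ => mass Ω r a v)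
      = fun a : ℝ => 1 + 4 * ((((Ω a v) ^ 2)⁻¹ * pdu r a v) * pdub r a v) := by
    funext a
    simp only [mass]
    ring
  have hD1' : HasDerivAt (fun a : ℝ => mass Ω r a v)
      (4 * ((-(((Ω u v) ^ 2)⁻¹ * κ * r u v * (pdu φ u v) ^ 2)) * pdub r u v
        + (((Ω u v) ^ 2)⁻¹ * pdu r u v) * (κ * (Ω u v) ^ 2 * (g (φ u v)) ^ 2 / (4 * r u v)))) u := by
    rw [hmass1]
    have h1 : HasDerivAt (fun a : ℝ => ((Ω a v) ^ 2)⁻¹ * pdu r a v)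
        (-(((Ω u v) ^ 2)⁻¹ * κ * r u v * (pdu φ u v) ^ 2)) u := by
      rw [← hderiva]; exact hda.hasDerivAt
    have h2 : HasDerivAt (fun a : ℝ => pdub r a v)
        (κ * (Ω u v) ^ 2 * (g (φ u v)) ^ 2 / (4 * r u v)) u := by
      rw [← hderivb]; exact hdb.hasDerivAt
    have := ((h1.mul h2).const_mul (4 : ℝ)).const_add (1 : ℝ)
    convert this using 1
    try ring
    all_goals rfl
  have part1 : pdu (mass Ω r) u v
      = 4 * κ * ((Ω u v) ^ 2)⁻¹ * r u v *
          (((Ω u v) ^ 2 / 4) * (g (φ u v)) ^ 2 / (r u v) ^ 2 * pdu r u v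
            - (pdu φ u v) ^ 2 * pdub r u v) := by
    have := hD1'.deriv
    rw [pdu, this]
    field_simp
    try ring
  ----------------------------------------------------------------
  -- Part 2 : derivative in v
  ----------------------------------------------------------------
  -- the function c(v') = Ω(u,v')⁻² ∂_ū r(u,v')
  have hceq : (fun b : ℝ => ((Ω u b) ^ 2)⁻¹ * pdub r u b)
      =ᶠ[nhds v] (fun b : ℝ => ((Ω u b) ^ 2)⁻¹ * D (u, b) (0, 1)) := by
    filter_upwards [htend2.eventually hpdub_eq] with b hb
    rw [hb]
  have hdc : DifferentiableAt ℝ (fun b : ℝ => ((Ω u b) ^ 2)⁻¹ * pdub r u b) v := by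
    refine DifferentiableAt.congr_of_eventuallyEq ?_ hceq
    exact ((hWslice2.pow 2).inv (pow_ne_zero 2 hΩne)).mul (hDw2 (0, 1))
  have hderivc : deriv (fun b : ℝ => ((Ω u b) ^ 2)⁻¹ * pdub r u b) v
      = -(((Ω u v) ^ 2)⁻¹ * κ * r u v * (pdub φ u v) ^ 2) := hN2 u v hp
  -- the function d(v') = ∂_u r(u,v') ; its derivative equals ∂_u∂_ū r by symmetry
  have hdeq : (fun b : ℝ => pdu r u b) =ᶠ[nhds v] (fun b : ℝ => D (u, b) (1, 0)) := by
    filter_upwards [htend2.eventually hpdu_eq] with b hb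
    exact hb
  have hdd : DifferentiableAt ℝ (fun b : ℝ => pdu r u b) v :=
    (hDw2 (1, 0)).congr_of_eventuallyEq hdeq
  -- compute the mixed derivatives through the second fderiv
  have hmix2 : deriv (fun b : ℝ => pdu r u b) v = fderiv ℝ D (u, v) (0, 1) (1, 0) := by
    have h := hasDerivAt_slice2 (hDwF (1, 0))
    have : deriv (fun b : ℝ => pdu r u b) v = deriv (fun b : ℝ => D (u, b) (1, 0)) v :=
      Filter.EventuallyEq.deriv_eq hdeq
    rw [this, h.deriv]
    rfl
  have hmix1 : pdu (pdub r) u v = fderiv ℝ D (u, v) (1, 0) (0, 1) := by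
    have h := hasDerivAt_slice1 (hDwF (0, 1))
    have heq : (fun a : ℝ => pdub r a v) =ᶠ[nhds u] (fun a : ℝ => D (a, v) (0, 1)) := hbeq
    have : pdu (pdub r) u v = deriv (fun a : ℝ => D (a, v) (0, 1)) u :=
      Filter.EventuallyEq.deriv_eq heq
    rw [this, h.deriv]
    rfl
  have hderivd : deriv (fun b : ℝ => pdu r u b) v
      = κ * (Ω u v) ^ 2 * (g (φ u v)) ^ 2 / (4 * r u v) := by
    rw [hmix2, hsymm (0, 1) (1, 0), ← hmix1]
    exact hN3 u v hp
  -- assemble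
  have hmass2 : (fun b : ℝ => mass Ω r u b)
      = fun b : ℝ => 1 + 4 * ((((Ω u b) ^ 2)⁻¹ * pdub r u b) * pdu r u b) := by
    funext b
    simp only [mass]
    ring
  have hD2' : HasDerivAt (fun b : ℝ => mass Ω r u b)
      (4 * ((-(((Ω u v) ^ 2)⁻¹ * κ * r u v * (pdub φ u v) ^ 2)) * pdu r u v
        + (((Ω u v) ^ 2)⁻¹ * pdub r u v) * (κ * (Ω u v) ^ 2 * (g (φ u v)) ^ 2 / (4 * r u v)))) v := by
    rw [hmass2]
    have h1 : HasDerivAt (fun b : ℝ => ((Ω u b) ^ 2)⁻¹ * pdub r u b)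
        (-(((Ω u v) ^ 2)⁻¹ * κ * r u v * (pdub φ u v) ^ 2)) v := by
      rw [← hderivc]; exact hdc.hasDerivAt
    have h2 : HasDerivAt (fun b : ℝ => pdu r u b)
        (κ * (Ω u v) ^ 2 * (g (φ u v)) ^ 2 / (4 * r u v)) v := by
      rw [← hderivd]; exact hdd.hasDerivAt
    have := ((h1.mul h2).const_mul (4 : ℝ)).const_add (1 : ℝ)
    convert this using 1
    try ring
    all_goals rfl
  have part2 : pdub (mass Ω r) u v
      = 4 * κ * ((Ω u v) ^ 2)⁻¹ * r u v *
          (((Ω u v) ^ 2 / 4) * (g (φ u v)) ^ 2 / (r u v) ^ 2 * pdub r u v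
            - (pdub φ u v) ^ 2 * pdu r u v) := by
    have := hD2'.deriv
    rw [pdub, this]
    field_simp
    try ring
  exact ⟨part1, part2⟩
end

section
/- Suppose that (N1), (N2) and (N3) hold on U, and let m := 1 + 4 Ω^{−2} ∂_u r ∂_ū r. Then at every point of U where ∂_u r ≤ 0 and ∂_ū r ≥ 0 (the regular region) one has ∂_u m ≤ 0 and ∂_ū m ≥ 0; consequently, for any a, b ≥ 0, the derivative of m along the spacelike vector a∂_ū − b∂_u is nonnegative. -/
open Real Topology Filter

section AuxLemmas

lemma slice_u_hasDerivAt (F : ℝ × ℝ → ℝ) (u v : ℝ) (hF : DifferentiableAt ℝ F (u, v)) :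
    HasDerivAt (fun u' => F (u', v)) (fderiv ℝ F (u, v) (1, 0)) u :=
  hF.hasFDerivAt.comp_hasDerivAt u (HasDerivAt.prodMk (hasDerivAt_id u) (hasDerivAt_const u v))

lemma slice_v_hasDerivAt (F : ℝ × ℝ → ℝ) (u v : ℝ) (hF : DifferentiableAt ℝ F (u, v)) :
    HasDerivAt (fun v' => F (u, v')) (fderiv ℝ F (u, v) (0, 1)) v :=
  hF.hasFDerivAt.comp_hasDerivAt v (HasDerivAt.prodMk (hasDerivAt_const v u) (hasDerivAt_id v))

lemma c2_facts (U : Set (ℝ × ℝ)) (hU : IsOpen U) (f : ℝ → ℝ → ℝ)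
    (hf : ContDiffOn ℝ 2 (fun p : ℝ × ℝ => f p.1 p.2) U) (u v : ℝ) (huv : (u, v) ∈ U) :
    DifferentiableAt ℝ (fun u' => pdu f u' v) u ∧
    DifferentiableAt ℝ (fun v' => pdu f u v') v ∧
    DifferentiableAt ℝ (fun u' => pdub f u' v) u ∧
    DifferentiableAt ℝ (fun v' => pdub f u v') v ∧
    pdub (pdu f) u v = pdu (pdub f) u v := by
  set F : ℝ × ℝ → ℝ := fun p => f p.1 p.2 with hFdef
  have hmem : U ∈ 𝓝 (u, v) := hU.mem_nhds huv
  have hFd : ∀ q ∈ U, DifferentiableAt ℝ F q := fun q hq =>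
    (hf.differentiableOn two_ne_zero).differentiableAt (hU.mem_nhds hq)
  have hF' : ContDiffOn ℝ 1 (fderiv ℝ F) U := hf.fderiv_of_isOpen hU (by norm_num)
  have hF'd : DifferentiableAt ℝ (fderiv ℝ F) (u, v) :=
    (hF'.differentiableOn one_ne_zero).differentiableAt hmem
  set G1 : ℝ × ℝ → ℝ := fun q => fderiv ℝ F q (1, 0) with hG1def
  set G2 : ℝ × ℝ → ℝ := fun q => fderiv ℝ F q (0, 1) with hG2def
  have hG1f : HasFDerivAt G1
      ((ContinuousLinearMap.apply ℝ ℝ ((1:ℝ), (0:ℝ))).comp (fderiv ℝ (fderiv ℝ F) (u, v)))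
      (u, v) :=
    (ContinuousLinearMap.apply ℝ ℝ ((1:ℝ), (0:ℝ))).hasFDerivAt.comp (u, v) hF'd.hasFDerivAt
  have hG2f : HasFDerivAt G2
      ((ContinuousLinearMap.apply ℝ ℝ ((0:ℝ), (1:ℝ))).comp (fderiv ℝ (fderiv ℝ F) (u, v)))
      (u, v) :=
    (ContinuousLinearMap.apply ℝ ℝ ((0:ℝ), (1:ℝ))).hasFDerivAt.comp (u, v) hF'd.hasFDerivAt
  have hG1d : DifferentiableAt ℝ G1 (u, v) := hG1f.differentiableAt
  have hG2d : DifferentiableAt ℝ G2 (u, v) := hG2f.differentiableAt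
  have hpduG1 : ∀ q ∈ U, pdu f q.1 q.2 = G1 q := fun q hq =>
    (slice_u_hasDerivAt F q.1 q.2 (by simpa using hFd q hq)).deriv
  have hpdubG2 : ∀ q ∈ U, pdub f q.1 q.2 = G2 q := fun q hq =>
    (slice_v_hasDerivAt F q.1 q.2 (by simpa using hFd q hq)).deriv
  have hcu : Continuous fun u' : ℝ => ((u', v) : ℝ × ℝ) := by fun_prop
  have hcv : Continuous fun v' : ℝ => ((u, v') : ℝ × ℝ) := by fun_prop
  have hnu : {u' : ℝ | (u', v) ∈ U} ∈ 𝓝 u := (hU.preimage hcu).mem_nhds huv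
  have hnv : {v' : ℝ | (u, v') ∈ U} ∈ 𝓝 v := (hU.preimage hcv).mem_nhds huv
  have hev1u : (fun u' => pdu f u' v) =ᶠ[𝓝 u] fun u' => G1 (u', v) := by
    filter_upwards [hnu] with u' hu' using hpduG1 (u', v) hu'
  have hev1v : (fun v' => pdu f u v') =ᶠ[𝓝 v] fun v' => G1 (u, v') := by
    filter_upwards [hnv] with v' hv' using hpduG1 (u, v') hv'
  have hev2u : (fun u' => pdub f u' v) =ᶠ[𝓝 u] fun u' => G2 (u', v) := by
    filter_upwards [hnu] with u' hu' using hpdubG2 (u', v) hu'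
  have hev2v : (fun v' => pdub f u v') =ᶠ[𝓝 v] fun v' => G2 (u, v') := by
    filter_upwards [hnv] with v' hv' using hpdubG2 (u, v') hv'
  have hLu : DifferentiableAt ℝ (fun u' : ℝ => ((u', v) : ℝ × ℝ)) u :=
    differentiableAt_id.prodMk (differentiableAt_const v)
  have hLv : DifferentiableAt ℝ (fun v' : ℝ => ((u, v') : ℝ × ℝ)) v :=
    (differentiableAt_const u).prodMk differentiableAt_id
  have d1u : DifferentiableAt ℝ (fun u' => pdu f u' v) u :=
    (show DifferentiableAt ℝ (G1 ∘ fun u' : ℝ => ((u', v) : ℝ × ℝ)) u from hG1d.comp u hLu).congr_of_eventuallyEq hev1u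
  have d1v : DifferentiableAt ℝ (fun v' => pdu f u v') v :=
    (hG1d.comp v hLv).congr_of_eventuallyEq hev1v
  have d2u : DifferentiableAt ℝ (fun u' => pdub f u' v) u :=
    (show DifferentiableAt ℝ (G2 ∘ fun u' : ℝ => ((u', v) : ℝ × ℝ)) u from hG2d.comp u hLu).congr_of_eventuallyEq hev2u
  have d2v : DifferentiableAt ℝ (fun v' => pdub f u v') v :=
    (hG2d.comp v hLv).congr_of_eventuallyEq hev2v
  refine ⟨d1u, d1v, d2u, d2v, ?_⟩
  have hsymm : ∀ w z : ℝ × ℝ,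
      fderiv ℝ (fderiv ℝ F) (u, v) w z = fderiv ℝ (fderiv ℝ F) (u, v) z w := by
    intro w z
    refine second_derivative_symmetric_of_eventually (f := F) ?_ hF'd.hasFDerivAt w z
    filter_upwards [hmem] with q hq using (hFd q hq).hasFDerivAt
  have e1 : pdub (pdu f) u v = fderiv ℝ (fderiv ℝ F) (u, v) (0, 1) (1, 0) := by
    have h1 : deriv (fun v' => pdu f u v') v = deriv (fun v' => G1 (u, v')) v :=
      hev1v.deriv_eq
    have h2 : deriv (fun v' => G1 (u, v')) v = fderiv ℝ G1 (u, v) (0, 1) :=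
      (slice_v_hasDerivAt G1 u v hG1d).deriv
    rw [show pdub (pdu f) u v = deriv (fun v' => pdu f u v') v from rfl, h1, h2,
      hG1f.fderiv]
    rfl
  have e2 : pdu (pdub f) u v = fderiv ℝ (fderiv ℝ F) (u, v) (1, 0) (0, 1) := by
    have h1 : deriv (fun u' => pdub f u' v) u = deriv (fun u' => G2 (u', v)) u :=
      hev2u.deriv_eq
    have h2 : deriv (fun u' => G2 (u', v)) u = fderiv ℝ G2 (u, v) (1, 0) :=
      (slice_u_hasDerivAt G2 u v hG2d).deriv
    rw [show pdu (pdub f) u v = deriv (fun u' => pdub f u' v) u from rfl, h1, h2,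
      hG2f.fderiv]
    rfl
  rw [e1, e2, hsymm]

end AuxLemmas

/-- Given (N1), (N2), (N3) on `U`, at every point of the regular region
(`∂_u r ≤ 0` and `∂_ū r ≥ 0`) one has `∂_u m ≤ 0` and `∂_ū m ≥ 0`; consequently the
derivative of `m` along any spacelike vector `a ∂_ū − b ∂_u` with `a, b ≥ 0` is
nonnegative. -/
theorem mass_monotone_regular_region
    (κ : ℝ) (hκ : 0 < κ)
    (g : ℝ → ℝ) (hg : ContDiff ℝ 1 g)
    (U : Set (ℝ × ℝ)) (hU : IsOpen U)
    (Ω r φ : ℝ → ℝ → ℝ)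
    (hΩ : ContDiffOn ℝ 2 (fun p : ℝ × ℝ => Ω p.1 p.2) U)
    (hr : ContDiffOn ℝ 2 (fun p : ℝ × ℝ => r p.1 p.2) U)
    (hφ : ContDiffOn ℝ 2 (fun p : ℝ × ℝ => φ p.1 p.2) U)
    (hΩpos : ∀ p ∈ U, 0 < Ω p.1 p.2)
    (hrpos : ∀ p ∈ U, 0 < r p.1 p.2)
    (hN1 : ∀ u v : ℝ, (u, v) ∈ U →
      pdu (fun u' v' => ((Ω u' v') ^ 2)⁻¹ * pdu r u' v') u v
        = -(((Ω u v) ^ 2)⁻¹ * κ * r u v * (pdu φ u v) ^ 2))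
    (hN2 : ∀ u v : ℝ, (u, v) ∈ U →
      pdub (fun u' v' => ((Ω u' v') ^ 2)⁻¹ * pdub r u' v') u v
        = -(((Ω u v) ^ 2)⁻¹ * κ * r u v * (pdub φ u v) ^ 2))
    (hN3 : ∀ u v : ℝ, (u, v) ∈ U →
      pdu (pdub r) u v = κ * (Ω u v) ^ 2 * (g (φ u v)) ^ 2 / (4 * r u v)) :
    ∀ u v : ℝ, (u, v) ∈ U → pdu r u v ≤ 0 → 0 ≤ pdub r u v →
      pdu (mass Ω r) u v ≤ 0
      ∧ 0 ≤ pdub (mass Ω r) u v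
      ∧ ∀ a b : ℝ, 0 ≤ a → 0 ≤ b →
          0 ≤ a * pdub (mass Ω r) u v - b * pdu (mass Ω r) u v := by
  intro u v huv hp hq
  obtain ⟨d1u, d1v, d2u, d2v, hsymm⟩ := c2_facts U hU r hr u v huv
  have hO : 0 < Ω u v := hΩpos (u, v) huv
  have hR : 0 < r u v := hrpos (u, v) huv
  have hΩdF : DifferentiableAt ℝ (fun p : ℝ × ℝ => Ω p.1 p.2) (u, v) :=
    (hΩ.differentiableOn two_ne_zero).differentiableAt (hU.mem_nhds huv)
  have hΩu : DifferentiableAt ℝ (fun u' => Ω u' v) u :=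
    (slice_u_hasDerivAt _ u v hΩdF).differentiableAt
  have hΩv : DifferentiableAt ℝ (fun v' => Ω u v') v :=
    (slice_v_hasDerivAt _ u v hΩdF).differentiableAt
  have hIu : DifferentiableAt ℝ (fun u' => ((Ω u' v) ^ 2)⁻¹) u :=
    (hΩu.pow 2).inv (show Ω u v ^ 2 ≠ 0 by positivity)
  have hIv : DifferentiableAt ℝ (fun v' => ((Ω u v') ^ 2)⁻¹) v :=
    (hΩv.pow 2).inv (show Ω u v ^ 2 ≠ 0 by positivity)
  -- abbreviations
  set w : ℝ := ((Ω u v) ^ 2)⁻¹ with hw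
  have hwpos : 0 ≤ w := by positivity
  set D : ℝ := κ * (Ω u v) ^ 2 * (g (φ u v)) ^ 2 / (4 * r u v) with hD
  have hDpos : 0 ≤ D := by positivity
  -- u derivative of the mass
  have hAha : HasDerivAt (fun u' => ((Ω u' v) ^ 2)⁻¹ * pdu r u' v)
      (-(w * κ * r u v * (pdu φ u v) ^ 2)) u := by
    have h := (hIu.mul d1u).hasDerivAt
    simp only [Pi.mul_def] at h
    rwa [show deriv (fun u' => ((Ω u' v) ^ 2)⁻¹ * pdu r u' v) u
        = pdu (fun u' v' => ((Ω u' v') ^ 2)⁻¹ * pdu r u' v') u v from rfl,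
      hN1 u v huv] at h
  have hQha : HasDerivAt (fun u' => pdub r u' v) D u := by
    have h := d2u.hasDerivAt
    rwa [show deriv (fun u' => pdub r u' v) u = pdu (pdub r) u v from rfl,
      hN3 u v huv] at h
  have hMu : HasDerivAt (fun u' => mass Ω r u' v)
      (4 * (-(w * κ * r u v * (pdu φ u v) ^ 2) * pdub r u v
        + (((Ω u v) ^ 2)⁻¹ * pdu r u v) * D)) u := by
    have h := ((hAha.mul hQha).const_mul 4).const_add 1
    simp only [Pi.mul_def] at h
    have he : (fun u' => mass Ω r u' v)
        = fun u' => 1 + 4 * (((Ω u' v) ^ 2)⁻¹ * pdu r u' v * pdub r u' v) := by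
      funext u'; simp only [mass]; ring
    rw [he]; convert h using 1
  have hMuval : pdu (mass Ω r) u v
      = 4 * (-(w * κ * r u v * (pdu φ u v) ^ 2) * pdub r u v
        + (((Ω u v) ^ 2)⁻¹ * pdu r u v) * D) := hMu.deriv
  -- v derivative of the mass
  have hBha : HasDerivAt (fun v' => ((Ω u v') ^ 2)⁻¹ * pdub r u v')
      (-(w * κ * r u v * (pdub φ u v) ^ 2)) v := by
    have h := (hIv.mul d2v).hasDerivAt
    simp only [Pi.mul_def] at h
    rwa [show deriv (fun v' => ((Ω u v') ^ 2)⁻¹ * pdub r u v') v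
        = pdub (fun u' v' => ((Ω u' v') ^ 2)⁻¹ * pdub r u' v') u v from rfl,
      hN2 u v huv] at h
  have hPha : HasDerivAt (fun v' => pdu r u v') D v := by
    have h := d1v.hasDerivAt
    rwa [show deriv (fun v' => pdu r u v') v = pdub (pdu r) u v from rfl,
      hsymm, hN3 u v huv] at h
  have hMv : HasDerivAt (fun v' => mass Ω r u v')
      (4 * (-(w * κ * r u v * (pdub φ u v) ^ 2) * pdu r u v
        + (((Ω u v) ^ 2)⁻¹ * pdub r u v) * D)) v := by
    have h := ((hBha.mul hPha).const_mul 4).const_add 1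
    simp only [Pi.mul_def] at h
    have he : (fun v' => mass Ω r u v')
        = fun v' => 1 + 4 * (((Ω u v') ^ 2)⁻¹ * pdub r u v' * pdu r u v') := by
      funext v'; simp only [mass]; ring
    rw [he]; convert h using 1 <;> ring
  have hMvval : pdub (mass Ω r) u v
      = 4 * (-(w * κ * r u v * (pdub φ u v) ^ 2) * pdu r u v
        + (((Ω u v) ^ 2)⁻¹ * pdub r u v) * D) := hMv.deriv
  -- signs
  have hu0 : pdu (mass Ω r) u v ≤ 0 := by
    rw [hMuval]
    have t1 : -(w * κ * r u v * (pdu φ u v) ^ 2) * pdub r u v ≤ 0 :=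
      mul_nonpos_of_nonpos_of_nonneg (neg_nonpos.mpr (by positivity)) hq
    have t2 : (((Ω u v) ^ 2)⁻¹ * pdu r u v) * D ≤ 0 :=
      mul_nonpos_of_nonpos_of_nonneg (mul_nonpos_of_nonneg_of_nonpos hwpos hp) hDpos
    linarith
  have hv0 : 0 ≤ pdub (mass Ω r) u v := by
    rw [hMvval]
    have t1 : 0 ≤ -(w * κ * r u v * (pdub φ u v) ^ 2) * pdu r u v := by
      have h := mul_nonneg (show (0:ℝ) ≤ w * κ * r u v * (pdub φ u v) ^ 2 by positivity)
        (neg_nonneg.mpr hp)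
      nlinarith [h]
    have t2 : 0 ≤ (((Ω u v) ^ 2)⁻¹ * pdub r u v) * D :=
      mul_nonneg (mul_nonneg hwpos hq) hDpos
    linarith
  refine ⟨hu0, hv0, fun a b ha hb => ?_⟩
  have h1 : 0 ≤ a * pdub (mass Ω r) u v := mul_nonneg ha hv0
  have h2 : b * pdu (mass Ω r) u v ≤ 0 := mul_nonpos_of_nonneg_of_nonpos hb hu0
  linarith
end

section
/- Suppose that (N1), (N2) and (N3) hold on U, and let m := 1 + 4 Ω^{−2} ∂_u r ∂_ū r. Let u₀ and ū₀ < ū₁ be such that the segment {u₀} × [ū₀, ū₁] lies in U, and suppose ∂_u r ≤ 0 ≤ ∂_ū r along this segment. Then 4κ ∫_{ū₀}^{ū₁} ( Ω^{−2} r (∂_ū φ)² (−∂_u r) )(u₀, ū) dū ≤ m(u₀, ū₁) − m(u₀, ū₀). In particular, if m(u₀, ū₀) ≥ 0 and m(u₀, ū₁) ≤ 1, then the left-hand side is at most 1. -/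
open Real

private lemma hasDerivAt_slice_fst (F : ℝ × ℝ → ℝ) {u v : ℝ}
    (h : DifferentiableAt ℝ F (u, v)) :
    HasDerivAt (fun u' => F (u', v)) (fderiv ℝ F (u, v) (1, 0)) u := by
  have hc : HasDerivAt (fun u' : ℝ => ((u', v) : ℝ × ℝ)) (1, 0) u :=
    (hasDerivAt_id u).prodMk (hasDerivAt_const u v)
  exact h.hasFDerivAt.comp_hasDerivAt u hc

private lemma hasDerivAt_slice_snd (F : ℝ × ℝ → ℝ) {u v : ℝ}
    (h : DifferentiableAt ℝ F (u, v)) :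
    HasDerivAt (fun v' => F (u, v')) (fderiv ℝ F (u, v) (0, 1)) v := by
  have hc : HasDerivAt (fun v' : ℝ => ((u, v') : ℝ × ℝ)) (0, 1) v :=
    (hasDerivAt_const v u).prodMk (hasDerivAt_id v)
  exact h.hasFDerivAt.comp_hasDerivAt v hc

/-- `v' ↦ fderiv F (u,v') w` has derivative given by the second derivative. -/
private lemma hasDerivAt_fderiv_slice_snd (F : ℝ × ℝ → ℝ) {u v : ℝ}
    (h : DifferentiableAt ℝ (fderiv ℝ F) (u, v)) (w : ℝ × ℝ) :
    HasDerivAt (fun v' => fderiv ℝ F (u, v') w)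
      (fderiv ℝ (fderiv ℝ F) (u, v) (0, 1) w) v := by
  have hc : HasDerivAt (fun v' : ℝ => ((u, v') : ℝ × ℝ)) (0, 1) v :=
    (hasDerivAt_const v u).prodMk (hasDerivAt_id v)
  have h1 : HasDerivAt (fun v' => fderiv ℝ F (u, v'))
      (fderiv ℝ (fderiv ℝ F) (u, v) (0, 1)) v :=
    h.hasFDerivAt.comp_hasDerivAt v hc
  simpa using h1.clm_apply (hasDerivAt_const v w)

private lemma hasDerivAt_fderiv_slice_fst (F : ℝ × ℝ → ℝ) {u v : ℝ}
    (h : DifferentiableAt ℝ (fderiv ℝ F) (u, v)) (w : ℝ × ℝ) :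
    HasDerivAt (fun u' => fderiv ℝ F (u', v) w)
      (fderiv ℝ (fderiv ℝ F) (u, v) (1, 0) w) u := by
  have hc : HasDerivAt (fun u' : ℝ => ((u', v) : ℝ × ℝ)) (1, 0) u :=
    (hasDerivAt_id u).prodMk (hasDerivAt_const u v)
  have h1 : HasDerivAt (fun u' => fderiv ℝ F (u', v))
      (fderiv ℝ (fderiv ℝ F) (u, v) (1, 0)) u :=
    h.hasFDerivAt.comp_hasDerivAt u hc
  simpa using h1.clm_apply (hasDerivAt_const u w)

/-- Flux estimate: given (N1), (N2), (N3) on `U` and a null segment `{u₀} × [ub₀, ub₁] ⊆ U`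
on which `∂_u r ≤ 0 ≤ ∂_ū r`, one has
`4κ ∫_{ub₀}^{ub₁} Ω^{−2} r (∂_ūφ)² (−∂_u r)(u₀,ū) dū ≤ m(u₀,ub₁) − m(u₀,ub₀)`;
in particular, if `m(u₀,ub₀) ≥ 0` and `m(u₀,ub₁) ≤ 1`, the flux is at most `1`. -/
theorem mass_flux_bound
    (κ : ℝ) (hκ : 0 < κ)
    (g : ℝ → ℝ) (hg : ContDiff ℝ 1 g)
    (U : Set (ℝ × ℝ)) (hU : IsOpen U)
    (Ω r φ : ℝ → ℝ → ℝ)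
    (hΩ : ContDiffOn ℝ 2 (fun p : ℝ × ℝ => Ω p.1 p.2) U)
    (hr : ContDiffOn ℝ 2 (fun p : ℝ × ℝ => r p.1 p.2) U)
    (hφ : ContDiffOn ℝ 2 (fun p : ℝ × ℝ => φ p.1 p.2) U)
    (hΩpos : ∀ p ∈ U, 0 < Ω p.1 p.2)
    (hrpos : ∀ p ∈ U, 0 < r p.1 p.2)
    (hN1 : ∀ u v : ℝ, (u, v) ∈ U →
      pdu (fun u' v' => ((Ω u' v') ^ 2)⁻¹ * pdu r u' v') u v
        = -(((Ω u v) ^ 2)⁻¹ * κ * r u v * (pdu φ u v) ^ 2))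
    (hN2 : ∀ u v : ℝ, (u, v) ∈ U →
      pdub (fun u' v' => ((Ω u' v') ^ 2)⁻¹ * pdub r u' v') u v
        = -(((Ω u v) ^ 2)⁻¹ * κ * r u v * (pdub φ u v) ^ 2))
    (hN3 : ∀ u v : ℝ, (u, v) ∈ U →
      pdu (pdub r) u v = κ * (Ω u v) ^ 2 * (g (φ u v)) ^ 2 / (4 * r u v))
    (u₀ ub₀ ub₁ : ℝ) (h01 : ub₀ < ub₁)
    (hseg : ∀ v ∈ Set.Icc ub₀ ub₁, (u₀, v) ∈ U)
    (hmono : ∀ v ∈ Set.Icc ub₀ ub₁, pdu r u₀ v ≤ 0 ∧ 0 ≤ pdub r u₀ v) :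
    (4 * κ * ∫ v in ub₀..ub₁,
        ((Ω u₀ v) ^ 2)⁻¹ * r u₀ v * (pdub φ u₀ v) ^ 2 * (-(pdu r u₀ v)))
      ≤ mass Ω r u₀ ub₁ - mass Ω r u₀ ub₀
    ∧ (0 ≤ mass Ω r u₀ ub₀ → mass Ω r u₀ ub₁ ≤ 1 →
        (4 * κ * ∫ v in ub₀..ub₁,
            ((Ω u₀ v) ^ 2)⁻¹ * r u₀ v * (pdub φ u₀ v) ^ 2 * (-(pdu r u₀ v))) ≤ 1) := by
  classical
  set R : ℝ × ℝ → ℝ := fun p => r p.1 p.2 with hRdef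
  set W : ℝ × ℝ → ℝ := fun p => Ω p.1 p.2 with hWdef
  set Φ : ℝ × ℝ → ℝ := fun p => φ p.1 p.2 with hΦdef
  -- basic differentiability
  have hRd : ∀ p ∈ U, DifferentiableAt ℝ R p := fun p hp =>
    (hr.contDiffAt (hU.mem_nhds hp)).differentiableAt (by norm_num)
  have hWd : ∀ p ∈ U, DifferentiableAt ℝ W p := fun p hp =>
    (hΩ.contDiffAt (hU.mem_nhds hp)).differentiableAt (by norm_num)
  have hΦd : ∀ p ∈ U, DifferentiableAt ℝ Φ p := fun p hp =>
    (hφ.contDiffAt (hU.mem_nhds hp)).differentiableAt (by norm_num)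
  have hR1 : ContDiffOn ℝ 1 (fderiv ℝ R) U := hr.fderiv_of_isOpen hU (by norm_num)
  have hΦ1 : ContDiffOn ℝ 1 (fderiv ℝ Φ) U := hφ.fderiv_of_isOpen hU (by norm_num)
  have hRFd : ∀ p ∈ U, DifferentiableAt ℝ (fderiv ℝ R) p := fun p hp =>
    (hR1.contDiffAt (hU.mem_nhds hp)).differentiableAt (by norm_num)
  -- identify partial derivatives with fderiv applications
  have hpdu_eq : ∀ u v, (u, v) ∈ U → pdu r u v = fderiv ℝ R (u, v) (1, 0) := fun u v hp =>
    (hasDerivAt_slice_fst R (hRd _ hp)).deriv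
  have hpdub_eq : ∀ u v, (u, v) ∈ U → pdub r u v = fderiv ℝ R (u, v) (0, 1) := fun u v hp =>
    (hasDerivAt_slice_snd R (hRd _ hp)).deriv
  have hpdubφ_eq : ∀ u v, (u, v) ∈ U → pdub φ u v = fderiv ℝ Φ (u, v) (0, 1) := fun u v hp =>
    (hasDerivAt_slice_snd Φ (hΦd _ hp)).deriv
  -- eventual membership along the vertical line
  have hev : ∀ v : ℝ, (u₀, v) ∈ U → ∀ᶠ v' in nhds v, (u₀, v') ∈ U := by
    intro v hv
    have hcont : ContinuousAt (fun v' : ℝ => ((u₀, v') : ℝ × ℝ)) v := by fun_prop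
    exact hcont.preimage_mem_nhds (hU.mem_nhds hv)
  have hevu : ∀ u v : ℝ, (u, v) ∈ U → ∀ᶠ u' in nhds u, (u', v) ∈ U := by
    intro u v hv
    have hcont : ContinuousAt (fun u' : ℝ => ((u', v) : ℝ × ℝ)) u := by fun_prop
    exact hcont.preimage_mem_nhds (hU.mem_nhds hv)
  -- derivative of v ↦ ∂ᵤr(u₀,v)
  have hA : ∀ v, (u₀, v) ∈ U → HasDerivAt (fun v' => pdu r u₀ v')
      (κ * (Ω u₀ v) ^ 2 * (g (φ u₀ v)) ^ 2 / (4 * r u₀ v)) v := by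
    intro v hp
    have h2 : HasDerivAt (fun v' => fderiv ℝ R (u₀, v') (1, 0))
        (fderiv ℝ (fderiv ℝ R) (u₀, v) (0, 1) (1, 0)) v :=
      hasDerivAt_fderiv_slice_snd R (hRFd _ hp) _
    have heq : (fun v' => fderiv ℝ R (u₀, v') (1, 0)) =ᶠ[nhds v]
        (fun v' => pdu r u₀ v') := by
      filter_upwards [hev v hp] with v' hv' using (hpdu_eq u₀ v' hv').symm
    have h3 : HasDerivAt (fun v' => pdu r u₀ v')
        (fderiv ℝ (fderiv ℝ R) (u₀, v) (0, 1) (1, 0)) v :=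
      h2.congr_of_eventuallyEq heq.symm
    have hsymm : fderiv ℝ (fderiv ℝ R) (u₀, v) (0, 1) (1, 0)
        = fderiv ℝ (fderiv ℝ R) (u₀, v) (1, 0) (0, 1) := by
      have hev2 : ∀ᶠ q in nhds (u₀, v), HasFDerivAt R (fderiv ℝ R q) q := by
        filter_upwards [hU.mem_nhds hp] with q hq using (hRd q hq).hasFDerivAt
      exact second_derivative_symmetric_of_eventually hev2 (hRFd _ hp).hasFDerivAt _ _
    have h4 : pdu (pdub r) u₀ v = fderiv ℝ (fderiv ℝ R) (u₀, v) (1, 0) (0, 1) := by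
      have h2' : HasDerivAt (fun u' => fderiv ℝ R (u', v) (0, 1))
          (fderiv ℝ (fderiv ℝ R) (u₀, v) (1, 0) (0, 1)) u₀ :=
        hasDerivAt_fderiv_slice_fst R (hRFd _ hp) _
      have heq' : (fun u' => fderiv ℝ R (u', v) (0, 1)) =ᶠ[nhds u₀]
          (fun u' => pdub r u' v) := by
        filter_upwards [hevu u₀ v hp] with u' hu' using (hpdub_eq u' v hu').symm
      exact (h2'.congr_of_eventuallyEq heq'.symm).deriv
    have hval : fderiv ℝ (fderiv ℝ R) (u₀, v) (0, 1) (1, 0)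
        = κ * (Ω u₀ v) ^ 2 * (g (φ u₀ v)) ^ 2 / (4 * r u₀ v) := by
      rw [hsymm, ← h4]; exact hN3 u₀ v hp
    exact hval ▸ h3
  -- derivative of v ↦ Ω⁻²∂ᵥr(u₀,v)  (from N2)
  have hQ : ∀ v, (u₀, v) ∈ U → HasDerivAt (fun v' => ((Ω u₀ v') ^ 2)⁻¹ * pdub r u₀ v')
      (-(((Ω u₀ v) ^ 2)⁻¹ * κ * r u₀ v * (pdub φ u₀ v) ^ 2)) v := by
    intro v hp
    have hΩs : HasDerivAt (fun v' => Ω u₀ v') (fderiv ℝ W (u₀, v) (0, 1)) v :=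
      hasDerivAt_slice_snd W (hWd _ hp)
    have hΩne : Ω u₀ v ≠ 0 := ne_of_gt (hΩpos _ hp)
    have hw : HasDerivAt (fun v' => ((Ω u₀ v') ^ 2)⁻¹)
        (-(2 * Ω u₀ v ^ (2 - 1) * fderiv ℝ W (u₀, v) (0, 1)) / (Ω u₀ v ^ 2) ^ 2) v :=
      (hΩs.pow 2).inv (pow_ne_zero 2 hΩne)
    have hBs : HasDerivAt (fun v' => fderiv ℝ R (u₀, v') (0, 1))
        (fderiv ℝ (fderiv ℝ R) (u₀, v) (0, 1) (0, 1)) v :=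
      hasDerivAt_fderiv_slice_snd R (hRFd _ hp) _
    have heq : (fun v' => fderiv ℝ R (u₀, v') (0, 1)) =ᶠ[nhds v]
        (fun v' => pdub r u₀ v') := by
      filter_upwards [hev v hp] with v' hv' using (hpdub_eq u₀ v' hv').symm
    have hB : HasDerivAt (fun v' => pdub r u₀ v')
        (fderiv ℝ (fderiv ℝ R) (u₀, v) (0, 1) (0, 1)) v :=
      hBs.congr_of_eventuallyEq heq.symm
    have hprod : HasDerivAt (fun v' => ((Ω u₀ v') ^ 2)⁻¹ * pdub r u₀ v')
        (-(2 * Ω u₀ v ^ (2 - 1) * fderiv ℝ W (u₀, v) (0, 1)) / (Ω u₀ v ^ 2) ^ 2 * pdub r u₀ v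
          + ((Ω u₀ v) ^ 2)⁻¹ * fderiv ℝ (fderiv ℝ R) (u₀, v) (0, 1) (0, 1)) v := hw.mul hB
    have hval : deriv (fun v' => ((Ω u₀ v') ^ 2)⁻¹ * pdub r u₀ v') v
        = -(((Ω u₀ v) ^ 2)⁻¹ * κ * r u₀ v * (pdub φ u₀ v) ^ 2) := hN2 u₀ v hp
    rw [← hval, hprod.deriv]
    exact hprod
  -- derivative of the mass along the segment
  set D : ℝ → ℝ := fun v =>
    4 * ((-(((Ω u₀ v) ^ 2)⁻¹ * κ * r u₀ v * (pdub φ u₀ v) ^ 2)) * pdu r u₀ v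
      + (((Ω u₀ v) ^ 2)⁻¹ * pdub r u₀ v)
        * (κ * (Ω u₀ v) ^ 2 * (g (φ u₀ v)) ^ 2 / (4 * r u₀ v))) with hD
  have hM : ∀ v ∈ Set.uIcc ub₀ ub₁, HasDerivAt (fun v' => mass Ω r u₀ v') (D v) v := by
    intro v hv
    rw [Set.uIcc_of_le h01.le] at hv
    have hp := hseg v hv
    have h5 : HasDerivAt (fun v' => (((Ω u₀ v') ^ 2)⁻¹ * pdub r u₀ v') * pdu r u₀ v')
        ((-(((Ω u₀ v) ^ 2)⁻¹ * κ * r u₀ v * (pdub φ u₀ v) ^ 2)) * pdu r u₀ v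
          + (((Ω u₀ v) ^ 2)⁻¹ * pdub r u₀ v)
            * (κ * (Ω u₀ v) ^ 2 * (g (φ u₀ v)) ^ 2 / (4 * r u₀ v))) v :=
      (hQ v hp).mul (hA v hp)
    have h6 := (h5.const_mul (4 : ℝ)).const_add (1 : ℝ)
    have hfun : (fun v' => mass Ω r u₀ v')
        = fun v' => 1 + 4 * ((((Ω u₀ v') ^ 2)⁻¹ * pdub r u₀ v') * pdu r u₀ v') := by
      funext v'; simp only [mass]; ring
    rw [hfun, hD]
    exact h6
  -- continuity of all ingredients along the segment
  have hline : ContinuousOn (fun v : ℝ => ((u₀, v) : ℝ × ℝ)) (Set.Icc ub₀ ub₁) := by fun_prop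
  have hmaps : Set.MapsTo (fun v : ℝ => ((u₀, v) : ℝ × ℝ)) (Set.Icc ub₀ ub₁) U := fun v hv =>
    hseg v hv
  have cΩ : ContinuousOn (fun v => Ω u₀ v) (Set.Icc ub₀ ub₁) :=
    (hΩ.continuousOn.comp hline hmaps)
  have cr : ContinuousOn (fun v => r u₀ v) (Set.Icc ub₀ ub₁) :=
    (hr.continuousOn.comp hline hmaps)
  have cφ : ContinuousOn (fun v => φ u₀ v) (Set.Icc ub₀ ub₁) :=
    (hφ.continuousOn.comp hline hmaps)
  have cw : ContinuousOn (fun v => ((Ω u₀ v) ^ 2)⁻¹) (Set.Icc ub₀ ub₁) :=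
    (cΩ.pow 2).inv₀ (fun v hv => pow_ne_zero 2 (ne_of_gt (hΩpos _ (hseg v hv))))
  have cA : ContinuousOn (fun v => pdu r u₀ v) (Set.Icc ub₀ ub₁) := by
    have : ContinuousOn (fun v => fderiv ℝ R (u₀, v) (1, 0)) (Set.Icc ub₀ ub₁) :=
      (ContinuousLinearMap.apply ℝ ℝ ((1 : ℝ), (0 : ℝ))).continuous.comp_continuousOn
        (hR1.continuousOn.comp hline hmaps)
    exact this.congr (fun v hv => hpdu_eq u₀ v (hseg v hv))
  have cB : ContinuousOn (fun v => pdub r u₀ v) (Set.Icc ub₀ ub₁) := by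
    have : ContinuousOn (fun v => fderiv ℝ R (u₀, v) (0, 1)) (Set.Icc ub₀ ub₁) :=
      (ContinuousLinearMap.apply ℝ ℝ ((0 : ℝ), (1 : ℝ))).continuous.comp_continuousOn
        (hR1.continuousOn.comp hline hmaps)
    exact this.congr (fun v hv => hpdub_eq u₀ v (hseg v hv))
  have cφb : ContinuousOn (fun v => pdub φ u₀ v) (Set.Icc ub₀ ub₁) := by
    have : ContinuousOn (fun v => fderiv ℝ Φ (u₀, v) (0, 1)) (Set.Icc ub₀ ub₁) :=
      (ContinuousLinearMap.apply ℝ ℝ ((0 : ℝ), (1 : ℝ))).continuous.comp_continuousOn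
        (hΦ1.continuousOn.comp hline hmaps)
    exact this.congr (fun v hv => hpdubφ_eq u₀ v (hseg v hv))
  have cg : ContinuousOn (fun v => g (φ u₀ v)) (Set.Icc ub₀ ub₁) :=
    hg.continuous.comp_continuousOn cφ
  have cI : ContinuousOn
      (fun v => ((Ω u₀ v) ^ 2)⁻¹ * r u₀ v * (pdub φ u₀ v) ^ 2 * (-(pdu r u₀ v)))
      (Set.Icc ub₀ ub₁) := ((cw.mul cr).mul (cφb.pow 2)).mul cA.neg
  have cD : ContinuousOn D (Set.Icc ub₀ ub₁) := by
    rw [hD]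
    apply ContinuousOn.mul continuousOn_const
    apply ContinuousOn.add
    · exact (((cw.mul continuousOn_const).mul cr).mul (cφb.pow 2)).neg.mul cA
    · refine (cw.mul cB).mul (ContinuousOn.div ?_ ?_ ?_)
      · exact ((continuousOn_const.mul (cΩ.pow 2)).mul (cg.pow 2))
      · exact continuousOn_const.mul cr
      · exact fun v hv => by
          have := hrpos _ (hseg v hv); positivity
  -- integrability
  have hIi : IntervalIntegrable
      (fun v => 4 * κ * (((Ω u₀ v) ^ 2)⁻¹ * r u₀ v * (pdub φ u₀ v) ^ 2 * (-(pdu r u₀ v))))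
      MeasureTheory.volume ub₀ ub₁ := by
    apply ContinuousOn.intervalIntegrable
    rw [Set.uIcc_of_le h01.le]
    exact continuousOn_const.mul cI
  have hDi : IntervalIntegrable D MeasureTheory.volume ub₀ ub₁ := by
    apply ContinuousOn.intervalIntegrable
    rw [Set.uIcc_of_le h01.le]; exact cD
  -- FTC
  have hFTC : (∫ v in ub₀..ub₁, D v)
      = mass Ω r u₀ ub₁ - mass Ω r u₀ ub₀ :=
    intervalIntegral.integral_eq_sub_of_hasDerivAt hM hDi
  -- pointwise comparison
  have hpt : ∀ v ∈ Set.Icc ub₀ ub₁,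
      4 * κ * (((Ω u₀ v) ^ 2)⁻¹ * r u₀ v * (pdub φ u₀ v) ^ 2 * (-(pdu r u₀ v))) ≤ D v := by
    intro v hv
    have hp := hseg v hv
    have hΩne : Ω u₀ v ≠ 0 := ne_of_gt (hΩpos _ hp)
    have hrp : 0 < r u₀ v := hrpos _ hp
    have hBnn : 0 ≤ pdub r u₀ v := (hmono v hv).2
    have hdiff : D v - 4 * κ * (((Ω u₀ v) ^ 2)⁻¹ * r u₀ v * (pdub φ u₀ v) ^ 2 * (-(pdu r u₀ v)))
        = κ * (g (φ u₀ v)) ^ 2 * pdub r u₀ v / r u₀ v := by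
      rw [hD]; field_simp; ring
    have hnn : 0 ≤ κ * (g (φ u₀ v)) ^ 2 * pdub r u₀ v / r u₀ v := by positivity
    linarith [hdiff ▸ hnn]
  have hmain : (4 * κ * ∫ v in ub₀..ub₁,
        ((Ω u₀ v) ^ 2)⁻¹ * r u₀ v * (pdub φ u₀ v) ^ 2 * (-(pdu r u₀ v)))
      ≤ mass Ω r u₀ ub₁ - mass Ω r u₀ ub₀ := by
    rw [← hFTC, ← intervalIntegral.integral_const_mul]
    exact intervalIntegral.integral_mono_on h01.le hIi hDi hpt
  exact ⟨hmain, fun h0 h1 => by linarith⟩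
end

section
/- Let t₀ < t₁, let R : [t₀,t₁] → (0,∞) be C¹, and let U ⊆ ℝ² be an open set containing K := {(t,r) : t₀ ≤ t ≤ t₁, 0 ≤ r ≤ R(t)}. Suppose (E1) and (E2) hold on K ∩ {r > 0}, and suppose the functions (t,r) ↦ r e^{β} 𝐞 and (t,r) ↦ r e^{α} 𝐦, a priori defined for r > 0, extend to C¹ functions A and B on U with B(t,0) = 0 for all t. If R′(t) = −e^{(α−β)(t,R(t))} for all t ∈ [t₀,t₁] (so that the curve r = R(t) is ingoing null), then the function E(t) := ∫_0^{R(t)} A(t,r) dr is nonincreasing on [t₀,t₁]; in particular E(t₁) ≤ E(t₀). -/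
open Real

/-- The truncated-cone region `K = {(t,r) : t₀ ≤ t ≤ t₁, 0 ≤ r ≤ R(t)}`. -/
def Kreg (t₀ t₁ : ℝ) (R : ℝ → ℝ) : Set (ℝ × ℝ) :=
  {p | t₀ ≤ p.1 ∧ p.1 ≤ t₁ ∧ 0 ≤ p.2 ∧ p.2 ≤ R p.1}

/-- Monotonicity of the energy inside the backward null cone: if (E1),(E2) hold on
`K ∩ {r > 0}`, the currents `r e^β 𝐞` and `r e^α 𝐦` extend to C¹ functions `A`, `B` on `U`
with `B(t,0) = 0`, and the curve `r = R(t)` is ingoing null, then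
`E(t) = ∫_0^{R(t)} A(t,r) dr` is nonincreasing; in particular `E(t₁) ≤ E(t₀)`. -/
theorem cone_energy_monotone
    (κ : ℝ) (hκ : 0 < κ)
    (g : ℝ → ℝ) (hg : ContDiff ℝ 1 g)
    (t₀ t₁ : ℝ) (ht : t₀ < t₁)
    (R : ℝ → ℝ) (hRpos : ∀ t ∈ Set.Icc t₀ t₁, 0 < R t)
    (hRC1 : ContDiffOn ℝ 1 R (Set.Icc t₀ t₁))
    (U : Set (ℝ × ℝ)) (hU : IsOpen U) (hKU : Kreg t₀ t₁ R ⊆ U)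
    (α β φ : ℝ → ℝ → ℝ)
    (hα : ContDiffOn ℝ 2 (fun p : ℝ × ℝ => α p.1 p.2) U)
    (hβ : ContDiffOn ℝ 2 (fun p : ℝ × ℝ => β p.1 p.2) U)
    (hφ : ContDiffOn ℝ 2 (fun p : ℝ × ℝ => φ p.1 p.2) U)
    (hE1 : ∀ t r : ℝ, (t, r) ∈ Kreg t₀ t₁ R → 0 < r →
      pdr β t r = (κ / 2) * r * exp (2 * β t r) *
        (exp (-(2 * α t r)) * (pdt φ t r) ^ 2 + exp (-(2 * β t r)) * (pdr φ t r) ^ 2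
          + (g (φ t r)) ^ 2 / r ^ 2))
    (hE2 : ∀ t r : ℝ, (t, r) ∈ Kreg t₀ t₁ R → 0 < r →
      pdt β t r = κ * r * pdt φ t r * pdr φ t r)
    (A B : ℝ → ℝ → ℝ)
    (hA : ContDiffOn ℝ 1 (fun p : ℝ × ℝ => A p.1 p.2) U)
    (hB : ContDiffOn ℝ 1 (fun p : ℝ × ℝ => B p.1 p.2) U)
    (hAeq : ∀ t r : ℝ, (t, r) ∈ U → 0 < r → A t r = r * exp (β t r) * eDen g α β φ t r)
    (hBeq : ∀ t r : ℝ, (t, r) ∈ U → 0 < r → B t r = r * exp (α t r) * mDen α β φ t r)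
    (hB0 : ∀ t : ℝ, B t 0 = 0)
    (hR' : ∀ t ∈ Set.Icc t₀ t₁,
      HasDerivWithinAt R (-(exp (α t (R t) - β t (R t)))) (Set.Icc t₀ t₁) t) :
    AntitoneOn (fun t => ∫ r in (0:ℝ)..(R t), A t r) (Set.Icc t₀ t₁)
    ∧ (∫ r in (0:ℝ)..(R t₁), A t₁ r) ≤ ∫ r in (0:ℝ)..(R t₀), A t₀ r := by
  have hKicc : ∀ t ∈ Set.Icc t₀ t₁, ∀ r : ℝ, 0 ≤ r → r ≤ R t →
      ((t, r) : ℝ × ℝ) ∈ Kreg t₀ t₁ R := fun t ht' r h0 h1 => ⟨ht'.1, ht'.2, h0, h1⟩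
  set βf : ℝ × ℝ → ℝ := fun p => β p.1 p.2 with hβfdef
  have hβdiff : ∀ p ∈ U, DifferentiableAt ℝ βf p := fun p hp =>
    (hβ.differentiableOn (by norm_num)).differentiableAt (hU.mem_nhds hp)
  set Dβ : ℝ × ℝ → (ℝ × ℝ →L[ℝ] ℝ) := fun p => fderiv ℝ βf p with hDβdef
  have hDβcont : ContinuousOn Dβ U := hβ.continuousOn_fderiv_of_isOpen hU (by norm_num)
  -- partial derivatives of β via the full derivative
  have hpdtH : ∀ t r : ℝ, (t, r) ∈ U → HasDerivAt (fun t' => β t' r) (Dβ (t, r) (1, 0)) t := by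
    intro t r hp
    have h1 : HasDerivAt (fun t' : ℝ => ((t', r) : ℝ × ℝ)) (1, 0) t :=
      (hasDerivAt_id t).prodMk (hasDerivAt_const t r)
    exact ((hβdiff _ hp).hasFDerivAt).comp_hasDerivAt t h1
  have hpdrH : ∀ t r : ℝ, (t, r) ∈ U → HasDerivAt (fun r' => β t r') (Dβ (t, r) (0, 1)) r := by
    intro t r hp
    have h1 : HasDerivAt (fun r' : ℝ => ((t, r') : ℝ × ℝ)) (0, 1) r :=
      (hasDerivAt_const r t).prodMk (hasDerivAt_id r)
    exact ((hβdiff _ hp).hasFDerivAt).comp_hasDerivAt r h1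
  have hpdt_eq : ∀ t r : ℝ, (t, r) ∈ U → pdt β t r = Dβ (t, r) (1, 0) :=
    fun t r hp => (hpdtH t r hp).deriv.symm ▸ rfl
  have hpdr_eq : ∀ t r : ℝ, (t, r) ∈ U → pdr β t r = Dβ (t, r) (0, 1) :=
    fun t r hp => (hpdrH t r hp).deriv.symm ▸ rfl
  -- (E1),(E2) rephrased: e^{-β}∂_r β = κ A and e^{-β}∂_t β = κ B on K ∩ {r > 0}
  have hE1' : ∀ t r : ℝ, (t, r) ∈ Kreg t₀ t₁ R → 0 < r →
      exp (-(β t r)) * Dβ (t, r) (0, 1) = κ * A t r := by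
    intro t r hK hr
    have hUp : ((t, r) : ℝ × ℝ) ∈ U := hKU hK
    rw [← hpdr_eq t r hUp, hE1 t r hK hr, hAeq t r hUp hr]
    unfold eDen
    have hexp : exp (-(β t r)) * exp (2 * β t r) = exp (β t r) := by
      rw [← Real.exp_add]; ring_nf
    set S := exp (-(2 * α t r)) * (pdt φ t r) ^ 2 + exp (-(2 * β t r)) * (pdr φ t r) ^ 2
      + (g (φ t r)) ^ 2 / r ^ 2 with hS
    linear_combination (κ / 2 * r * S) * hexp
  have hE2' : ∀ t r : ℝ, (t, r) ∈ Kreg t₀ t₁ R → 0 < r →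
      exp (-(β t r)) * Dβ (t, r) (1, 0) = κ * B t r := by
    intro t r hK hr
    have hUp : ((t, r) : ℝ × ℝ) ∈ U := hKU hK
    rw [← hpdt_eq t r hUp, hE2 t r hK hr, hBeq t r hUp hr]
    unfold mDen
    have hexp : exp (α t r) * exp (-(α t r + β t r)) = exp (-(β t r)) := by
      rw [← Real.exp_add]; ring_nf
    linear_combination (-(κ * r * pdt φ t r * pdr φ t r)) * hexp
  -- the time partial of β vanishes at r = 0
  have hDβt0 : ∀ t ∈ Set.Icc t₀ t₁, Dβ (t, 0) (1, 0) = 0 := by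
    intro t ht'
    have hU0 : ((t, 0) : ℝ × ℝ) ∈ U := hKU (hKicc t ht' 0 le_rfl (hRpos t ht').le)
    set h : ℝ → ℝ := fun r => exp (-(β t r)) * Dβ (t, r) (1, 0) - κ * B t r with hh
    have hc1 : ContinuousAt (fun r : ℝ => ((t, r) : ℝ × ℝ)) 0 := by fun_prop
    have hcβ : ContinuousAt (fun r : ℝ => β t r) 0 :=
      ((hβ.continuousOn.continuousAt (hU.mem_nhds hU0))).comp hc1
    have hcD : ContinuousAt (fun r : ℝ => Dβ (t, r) (1, 0)) 0 := by
      have hD : ContinuousAt Dβ ((t, 0) : ℝ × ℝ) := hDβcont.continuousAt (hU.mem_nhds hU0)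
      exact ((ContinuousLinearMap.apply ℝ ℝ ((1:ℝ), (0:ℝ))).continuous.continuousAt.comp
        (hD.comp hc1))
    have hcB : ContinuousAt (fun r : ℝ => B t r) 0 :=
      ((hB.continuousOn.continuousAt (hU.mem_nhds hU0))).comp hc1
    have hconth : ContinuousAt h 0 := by
      exact ((Real.continuous_exp.continuousAt.comp hcβ.neg).mul hcD).sub
        (continuousAt_const.mul hcB)
    have hzero : ∀ᶠ r in nhdsWithin (0:ℝ) (Set.Ioi 0), h r = 0 := by
      filter_upwards [Ioo_mem_nhdsGT_of_mem (Set.mem_Ico.2 ⟨le_refl (0:ℝ), hRpos t ht'⟩)]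
        with r hr
      have hK' := hKicc t ht' r hr.1.le hr.2.le
      have := hE2' t r hK' hr.1
      simp only [hh]
      linarith
    have hlim1 : Filter.Tendsto h (nhdsWithin (0:ℝ) (Set.Ioi 0)) (nhds (h 0)) :=
      hconth.continuousWithinAt.tendsto
    have hlim2 : Filter.Tendsto h (nhdsWithin (0:ℝ) (Set.Ioi 0)) (nhds 0) := by
      rw [Filter.tendsto_congr' hzero]; exact tendsto_const_nhds
    have h0 : h 0 = 0 := tendsto_nhds_unique hlim1 hlim2
    have hB00 : B t 0 = 0 := hB0 t
    have hexp : exp (-(β t 0)) ≠ 0 := (Real.exp_pos _).ne'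
    have : exp (-(β t 0)) * Dβ (t, 0) (1, 0) = 0 := by
      simp only [hh, hB00] at h0; linarith
    exact (mul_eq_zero.1 this).resolve_left hexp
  -- FTC: the energy integral in closed form
  have hInt : ∀ t ∈ Set.Icc t₀ t₁, (∫ r in (0:ℝ)..(R t), A t r)
      = (1 / κ) * exp (-(β t 0)) - (1 / κ) * exp (-(β t (R t))) := by
    intro t ht'
    have hUmem : ∀ r ∈ Set.Icc (0:ℝ) (R t), ((t, r) : ℝ × ℝ) ∈ U :=
      fun r hr => hKU (hKicc t ht' r hr.1 hr.2)
    set ψ : ℝ → ℝ := fun r => -(1 / κ) * exp (-(β t r)) with hψ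
    have hcont : ContinuousOn ψ (Set.Icc 0 (R t)) := by
      intro r hr
      have hc1 : ContinuousAt (fun r' : ℝ => ((t, r') : ℝ × ℝ)) r := by fun_prop
      have hcβ : ContinuousAt (fun r' : ℝ => β t r') r :=
        (hβ.continuousOn.continuousAt (hU.mem_nhds (hUmem r hr))).comp hc1
      exact (continuousAt_const.mul
        (Real.continuous_exp.continuousAt.comp hcβ.neg)).continuousWithinAt
    have hderiv : ∀ r ∈ Set.Ioo (0:ℝ) (R t), HasDerivAt ψ (A t r) r := by
      intro r hr
      have hUp : ((t, r) : ℝ × ℝ) ∈ U := hUmem r ⟨hr.1.le, hr.2.le⟩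
      have h1 : HasDerivAt (fun r' => β t r') (Dβ (t, r) (0, 1)) r := hpdrH t r hUp
      have h2 : HasDerivAt ψ (-(1 / κ) * (exp (-(β t r)) * -(Dβ (t, r) (0, 1)))) r :=
        (h1.neg.exp).const_mul _
      have h3 := hE1' t r (hKicc t ht' r hr.1.le hr.2.le) hr.1
      convert h2 using 1
      field_simp
      linarith
    have hAint : IntervalIntegrable (fun r => A t r) MeasureTheory.volume 0 (R t) := by
      apply ContinuousOn.intervalIntegrable
      intro r hr
      rw [Set.uIcc_of_le (hRpos t ht').le] at hr
      have hc1 : ContinuousAt (fun r' : ℝ => ((t, r') : ℝ × ℝ)) r := by fun_prop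
      exact ((hA.continuousOn.continuousAt (hU.mem_nhds (hUmem r hr))).comp
        hc1).continuousWithinAt
    have hFTC := intervalIntegral.integral_eq_sub_of_hasDeriv_right_of_le (hRpos t ht').le
      hcont (fun x hx => (hderiv x hx).hasDerivWithinAt) hAint
    rw [hFTC]
    simp only [hψ]
    ring
  -- the closed-form energy
  set G : ℝ → ℝ := fun t => (1 / κ) * exp (-(β t 0)) - (1 / κ) * exp (-(β t (R t)))
    with hG
  -- G is continuous on [t₀, t₁]
  have hGcont : ContinuousOn G (Set.Icc t₀ t₁) := by
    intro t ht'
    have hU0 : ((t, 0) : ℝ × ℝ) ∈ U := hKU (hKicc t ht' 0 le_rfl (hRpos t ht').le)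
    have hUR : ((t, R t) : ℝ × ℝ) ∈ U := hKU (hKicc t ht' (R t) (hRpos t ht').le le_rfl)
    have hc0 : ContinuousWithinAt (fun t' : ℝ => β t' 0) (Set.Icc t₀ t₁) t := by
      have hc1 : ContinuousAt (fun t' : ℝ => ((t', (0:ℝ)) : ℝ × ℝ)) t := by fun_prop
      have h2 : ContinuousAt (βf ∘ (fun t' : ℝ => ((t', (0:ℝ)) : ℝ × ℝ))) t :=
        ContinuousAt.comp (x := t)
          (hβ.continuousOn.continuousAt (hU.mem_nhds hU0)) hc1
      exact h2.continuousWithinAt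
    have hcR : ContinuousWithinAt (fun t' : ℝ => β t' (R t')) (Set.Icc t₀ t₁) t := by
      have hc1 : ContinuousWithinAt (fun t' : ℝ => ((t', R t') : ℝ × ℝ)) (Set.Icc t₀ t₁) t :=
        continuousWithinAt_id.prodMk (hRC1.continuousOn t ht')
      have h2 : ContinuousWithinAt (βf ∘ (fun t' : ℝ => ((t', R t') : ℝ × ℝ)))
          (Set.Icc t₀ t₁) t :=
        ContinuousAt.comp_continuousWithinAt (x := t)
          (hβ.continuousOn.continuousAt (hU.mem_nhds hUR)) hc1
      exact h2
    exact (continuousWithinAt_const.mul (Real.continuous_exp.continuousAt.comp_continuousWithinAt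
      hc0.neg)).sub (continuousWithinAt_const.mul
      (Real.continuous_exp.continuousAt.comp_continuousWithinAt hcR.neg))
  -- G has nonpositive derivative on the interior
  have hGd : ∀ t ∈ Set.Ioo t₀ t₁,
      HasDerivAt G (B t (R t) - exp (α t (R t) - β t (R t)) * A t (R t)) t := by
    intro t ht'
    have htIcc : t ∈ Set.Icc t₀ t₁ := ⟨ht'.1.le, ht'.2.le⟩
    have hU0 : ((t, 0) : ℝ × ℝ) ∈ U := hKU (hKicc t htIcc 0 le_rfl (hRpos t htIcc).le)
    have hUR : ((t, R t) : ℝ × ℝ) ∈ U := hKU (hKicc t htIcc (R t) (hRpos t htIcc).le le_rfl)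
    set c : ℝ := -(exp (α t (R t) - β t (R t))) with hc
    -- first summand: derivative 0
    have hD0 : Dβ (t, 0) (1, 0) = 0 := hDβt0 t htIcc
    have h1 : HasDerivAt (fun t' => (1 / κ) * exp (-(β t' 0)))
        ((1 / κ) * (exp (-(β t 0)) * -(Dβ (t, 0) (1, 0)))) t :=
      (((hpdtH t 0 hU0).neg).exp).const_mul _
    rw [hD0] at h1
    -- second summand
    have hRd : HasDerivAt R c t := (hR' t htIcc).hasDerivAt (Icc_mem_nhds ht'.1 ht'.2)
    have hcurve : HasDerivAt (fun t' : ℝ => ((t', R t') : ℝ × ℝ)) (1, c) t :=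
      (hasDerivAt_id t).prodMk hRd
    have hβc : HasDerivAt (fun t' => β t' (R t')) (Dβ (t, R t) (1, c)) t :=
      by have := ((hβdiff (t, R t) hUR).hasFDerivAt).comp_hasDerivAt t hcurve; exact this
    have hsplit : Dβ (t, R t) (1, c) = Dβ (t, R t) (1, 0) + c * Dβ (t, R t) (0, 1) := by
      have hv : ((1:ℝ), c) = ((1:ℝ), (0:ℝ)) + c • ((0:ℝ), (1:ℝ)) := by simp
      rw [hv, map_add, map_smul, smul_eq_mul]
    have h2 : HasDerivAt (fun t' => (1 / κ) * exp (-(β t' (R t'))))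
        ((1 / κ) * (exp (-(β t (R t))) * -(Dβ (t, R t) (1, c)))) t :=
      ((hβc.neg).exp).const_mul _
    have hsum := h1.sub h2
    have heq : (1 / κ) * (exp (-(β t 0)) * -(0:ℝ))
        - (1 / κ) * (exp (-(β t (R t))) * -(Dβ (t, R t) (1, c)))
        = B t (R t) - exp (α t (R t) - β t (R t)) * A t (R t) := by
      rw [hsplit]
      have hKR : ((t, R t) : ℝ × ℝ) ∈ Kreg t₀ t₁ R := hKicc t htIcc (R t) (hRpos t htIcc).le le_rfl
      have hA' := hE1' t (R t) hKR (hRpos t htIcc)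
      have hB' := hE2' t (R t) hKR (hRpos t htIcc)
      field_simp
      linear_combination hB' + c * hA' + (κ * A t (R t)) * hc
    rw [heq] at hsum
    exact hsum
  -- the boundary flux is nonpositive on the null curve
  have hGle : ∀ t ∈ Set.Ioo t₀ t₁,
      B t (R t) - exp (α t (R t) - β t (R t)) * A t (R t) ≤ 0 := by
    intro t ht'
    have htIcc : t ∈ Set.Icc t₀ t₁ := ⟨ht'.1.le, ht'.2.le⟩
    have hrp : 0 < R t := hRpos t htIcc
    have hUR : ((t, R t) : ℝ × ℝ) ∈ U := hKU (hKicc t htIcc (R t) hrp.le le_rfl)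
    rw [hBeq t (R t) hUR hrp, hAeq t (R t) hUR hrp]
    unfold eDen mDen
    have e1 : exp (-(α t (R t) + β t (R t))) = (exp (α t (R t)) * exp (β t (R t)))⁻¹ := by
      rw [Real.exp_neg, Real.exp_add]
    have e2 : exp (-(2 * α t (R t))) = (exp (α t (R t)) * exp (α t (R t)))⁻¹ := by
      rw [Real.exp_neg, two_mul, Real.exp_add]
    have e3 : exp (-(2 * β t (R t))) = (exp (β t (R t)) * exp (β t (R t)))⁻¹ := by
      rw [Real.exp_neg, two_mul, Real.exp_add]
    have e4 : exp (α t (R t) - β t (R t)) = exp (α t (R t)) / exp (β t (R t)) :=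
      Real.exp_sub _ _
    rw [e1, e2, e3, e4]
    set X := exp (α t (R t)) with hX
    set Y := exp (β t (R t)) with hY
    set u := pdt φ t (R t) with hu
    set v := pdr φ t (R t) with hv
    set F := (g (φ t (R t))) ^ 2 / (R t) ^ 2 with hF
    have hXp : 0 < X := Real.exp_pos _
    have hYp : 0 < Y := Real.exp_pos _
    have hFp : 0 ≤ F := by positivity
    have hkey : R t * X * ((X * Y)⁻¹ * u * v)
        - X / Y * (R t * Y * (1 / 2 * ((X * X)⁻¹ * u ^ 2 + (Y * Y)⁻¹ * v ^ 2 + F))) ≤ 0 := by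
      have hid : R t * X * ((X * Y)⁻¹ * u * v)
          - X / Y * (R t * Y * (1 / 2 * ((X * X)⁻¹ * u ^ 2 + (Y * Y)⁻¹ * v ^ 2 + F)))
          = -(R t / (X * Y ^ 2) * ((1 / 2) * (u * Y - v * X) ^ 2
              + (1 / 2) * X ^ 2 * Y ^ 2 * F)) := by
        field_simp
        ring
      rw [hid, neg_nonpos]
      positivity
    exact hkey
  -- G is antitone
  have hGanti : AntitoneOn G (Set.Icc t₀ t₁) := by
    apply antitoneOn_of_deriv_nonpos (convex_Icc t₀ t₁) hGcont
    · intro t ht'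
      rw [interior_Icc] at ht'
      exact (hGd t ht').differentiableAt.differentiableWithinAt
    · intro t ht'
      rw [interior_Icc] at ht'
      rw [(hGd t ht').deriv]
      exact hGle t ht'
  -- conclusion
  have hmain : AntitoneOn (fun t => ∫ r in (0:ℝ)..(R t), A t r) (Set.Icc t₀ t₁) := by
    intro a ha b hb hab
    simp only
    rw [hInt a ha, hInt b hb]
    exact hGanti ha hb hab
  exact ⟨hmain, hmain (Set.left_mem_Icc.2 ht.le) (Set.right_mem_Icc.2 ht.le) ht.le⟩
end

section
/- Suppose that (E1), (E2), (E3) and (E4) hold on U ∩ {r > 0}. Then for every a ∈ ℝ, at every point of U with r > 0: −∂_t( r^{a+1} e^{2β} 𝐦 ) + ∂_r( r^{a+1} e^{α+β} (𝐞 − 𝐟) ) = r^{a} e^{α+β} ( ((1+a)/2) e^{−2α}(∂_tφ)² + ((a−1)/2) e^{−2β}(∂_rφ)² + ((1−a)/2) g(φ)²/r² ). In particular, for a = 1 the right-hand side equals r e^{α+β} e^{−2α}(∂_tφ)². -/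
open Real

/-- The rotational potential density 𝐟 = g(φ)²/r². -/
noncomputable def fDen (g : ℝ → ℝ) (φ : ℝ → ℝ → ℝ) (t r : ℝ) : ℝ :=
  (g (φ t r)) ^ 2 / r ^ 2

private lemma sliceT {F : ℝ × ℝ → ℝ} {F' : ℝ × ℝ →L[ℝ] ℝ} {t r : ℝ}
    (h : HasFDerivAt F F' (t, r)) : HasDerivAt (fun t' => F (t', r)) (F' (1, 0)) t :=
  h.comp_hasDerivAt t (HasDerivAt.prodMk (hasDerivAt_id t) (hasDerivAt_const t r))

private lemma sliceR {F : ℝ × ℝ → ℝ} {F' : ℝ × ℝ →L[ℝ] ℝ} {t r : ℝ}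
    (h : HasFDerivAt F F' (t, r)) : HasDerivAt (fun r' => F (t, r')) (F' (0, 1)) r :=
  h.comp_hasDerivAt r (HasDerivAt.prodMk (hasDerivAt_const r t) (hasDerivAt_id r))

set_option maxHeartbeats 2000000 in
private theorem main_calc
    (κ : ℝ)
    (g : ℝ → ℝ) (hg : ContDiff ℝ 1 g)
    (U : Set (ℝ × ℝ)) (hU : IsOpen U)
    (α β φ : ℝ → ℝ → ℝ)
    (hα : ContDiffOn ℝ 2 (fun p : ℝ × ℝ => α p.1 p.2) U)
    (hβ : ContDiffOn ℝ 2 (fun p : ℝ × ℝ => β p.1 p.2) U)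
    (hφ : ContDiffOn ℝ 2 (fun p : ℝ × ℝ => φ p.1 p.2) U)
    (hE1 : ∀ t r : ℝ, (t, r) ∈ U → 0 < r →
      pdr β t r = (κ / 2) * r * exp (2 * β t r) *
        (exp (-(2 * α t r)) * (pdt φ t r) ^ 2 + exp (-(2 * β t r)) * (pdr φ t r) ^ 2
          + (g (φ t r)) ^ 2 / r ^ 2))
    (hE3 : ∀ t r : ℝ, (t, r) ∈ U → 0 < r →
      pdr α t r = (κ / 2) * r * exp (2 * β t r) *
        (exp (-(2 * α t r)) * (pdt φ t r) ^ 2 + exp (-(2 * β t r)) * (pdr φ t r) ^ 2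
          - (g (φ t r)) ^ 2 / r ^ 2))
    (hE4 : ∀ t r : ℝ, (t, r) ∈ U → 0 < r →
      -(exp (-(2 * α t r)) * (pdt (pdt φ) t r + (pdt β t r - pdt α t r) * pdt φ t r))
        + exp (-(2 * β t r)) * (pdr (pdr φ) t r + pdr φ t r / r
            + (pdr α t r - pdr β t r) * pdr φ t r)
      = g (φ t r) * deriv g (φ t r) / r ^ 2)
    (a t r : ℝ) (hmem : (t, r) ∈ U) (hr : 0 < r) :
      -(pdt (fun t' r' => r' ^ (a + 1) * exp (2 * β t' r') * mDen α β φ t' r') t r)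
        + pdr (fun t' r' => r' ^ (a + 1) * exp (α t' r' + β t' r')
            * (eDen g α β φ t' r' - fDen g φ t' r')) t r
      = r ^ a * exp (α t r + β t r) *
          (((1 + a) / 2) * exp (-(2 * α t r)) * (pdt φ t r) ^ 2
            + ((a - 1) / 2) * exp (-(2 * β t r)) * (pdr φ t r) ^ 2
            + ((1 - a) / 2) * (g (φ t r)) ^ 2 / r ^ 2) := by
  -- ## second-derivative machinery for φ
  set Φ : ℝ × ℝ → ℝ := fun p => φ p.1 p.2 with hΦdef
  have hfdU : ∀ t' r' : ℝ, (t', r') ∈ U → HasFDerivAt Φ (fderiv ℝ Φ (t', r')) (t', r') := by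
    intro t' r' h
    exact ((hφ.contDiffAt (hU.mem_nhds h)).differentiableAt (by norm_num)).hasFDerivAt
  have hpdt_eq : ∀ t' r' : ℝ, (t', r') ∈ U → pdt φ t' r' = fderiv ℝ Φ (t', r') (1, 0) :=
    fun t' r' h => (sliceT (hfdU t' r' h)).deriv
  have hpdr_eq : ∀ t' r' : ℝ, (t', r') ∈ U → pdr φ t' r' = fderiv ℝ Φ (t', r') (0, 1) :=
    fun t' r' h => (sliceR (hfdU t' r' h)).deriv
  have hfC : ContDiffOn ℝ 1 (fun q => fderiv ℝ Φ q) U := hφ.fderiv_of_isOpen hU (by norm_num)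
  have hfd2 : DifferentiableAt ℝ (fun q => fderiv ℝ Φ q) (t, r) :=
    ((hfC.differentiableOn one_ne_zero) (t, r) hmem).differentiableAt (hU.mem_nhds hmem)
  set f2 : ℝ × ℝ →L[ℝ] ℝ × ℝ →L[ℝ] ℝ := fderiv ℝ (fun q => fderiv ℝ Φ q) (t, r) with hf2def
  have hsym2 : ∀ v w : ℝ × ℝ, f2 v w = f2 w v := by
    intro v w
    refine second_derivative_symmetric_of_eventually (f := Φ) ?_ hfd2.hasFDerivAt v w
    filter_upwards [hU.mem_nhds hmem] with q hq
    exact ((hφ.contDiffAt (hU.mem_nhds hq)).differentiableAt (by norm_num)).hasFDerivAt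
  have happ : ∀ v : ℝ × ℝ, HasFDerivAt (fun q : ℝ × ℝ => fderiv ℝ Φ q v)
      ((ContinuousLinearMap.apply ℝ ℝ v).comp f2) (t, r) :=
    fun v => (ContinuousLinearMap.apply ℝ ℝ v).hasFDerivAt.comp (t, r) hfd2.hasFDerivAt
  have hmemT : ∀ᶠ t' in nhds t, (t', r) ∈ U :=
    (Continuous.continuousAt (continuous_id.prodMk continuous_const)).preimage_mem_nhds
      (hU.mem_nhds hmem)
  have hmemR : ∀ᶠ r' in nhds r, (t, r') ∈ U :=
    (Continuous.continuousAt (continuous_const.prodMk continuous_id)).preimage_mem_nhds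
      (hU.mem_nhds hmem)
  have hPtT : HasDerivAt (fun t' => pdt φ t' r) (f2 (1, 0) (1, 0)) t :=
    (sliceT (happ (1, 0))).congr_of_eventuallyEq
      (by filter_upwards [hmemT] with t' h using hpdt_eq t' r h)
  have hPtR : HasDerivAt (fun r' => pdt φ t r') (f2 (0, 1) (1, 0)) r :=
    (sliceR (happ (1, 0))).congr_of_eventuallyEq
      (by filter_upwards [hmemR] with r' h using hpdt_eq t r' h)
  have hPrT : HasDerivAt (fun t' => pdr φ t' r) (f2 (1, 0) (0, 1)) t :=
    (sliceT (happ (0, 1))).congr_of_eventuallyEq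
      (by filter_upwards [hmemT] with t' h using hpdr_eq t' r h)
  have hPrR : HasDerivAt (fun r' => pdr φ t r') (f2 (0, 1) (0, 1)) r :=
    (sliceR (happ (0, 1))).congr_of_eventuallyEq
      (by filter_upwards [hmemR] with r' h using hpdr_eq t r' h)
  have hPtT' : HasDerivAt (fun t' => pdt φ t' r) (pdt (pdt φ) t r) t :=
    hPtT.differentiableAt.hasDerivAt
  have hPrT' : HasDerivAt (fun t' => pdr φ t' r) (pdt (pdr φ) t r) t :=
    hPrT.differentiableAt.hasDerivAt
  have hPtR' : HasDerivAt (fun r' => pdt φ t r') (pdr (pdt φ) t r) r :=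
    hPtR.differentiableAt.hasDerivAt
  have hPrR' : HasDerivAt (fun r' => pdr φ t r') (pdr (pdr φ) t r) r :=
    hPrR.differentiableAt.hasDerivAt
  have hsymm : pdr (pdt φ) t r = pdt (pdr φ) t r := by
    have k1 : pdr (pdt φ) t r = f2 (0, 1) (1, 0) := hPtR.deriv
    have k2 : pdt (pdr φ) t r = f2 (1, 0) (0, 1) := hPrT.deriv
    rw [k1, k2, hsym2]
  -- ## first-order slices for α, β, φ
  have hαd : DifferentiableAt ℝ (fun p : ℝ × ℝ => α p.1 p.2) (t, r) :=
    (hα.contDiffAt (hU.mem_nhds hmem)).differentiableAt (by norm_num)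
  have hβd : DifferentiableAt ℝ (fun p : ℝ × ℝ => β p.1 p.2) (t, r) :=
    (hβ.contDiffAt (hU.mem_nhds hmem)).differentiableAt (by norm_num)
  have hφd : DifferentiableAt ℝ Φ (t, r) :=
    (hφ.contDiffAt (hU.mem_nhds hmem)).differentiableAt (by norm_num)
  have hAt : HasDerivAt (fun t' => α t' r) (pdt α t r) t :=
    (sliceT hαd.hasFDerivAt).differentiableAt.hasDerivAt
  have hAr : HasDerivAt (fun r' => α t r') (pdr α t r) r :=
    (sliceR hαd.hasFDerivAt).differentiableAt.hasDerivAt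
  have hBt : HasDerivAt (fun t' => β t' r) (pdt β t r) t :=
    (sliceT hβd.hasFDerivAt).differentiableAt.hasDerivAt
  have hBr : HasDerivAt (fun r' => β t r') (pdr β t r) r :=
    (sliceR hβd.hasFDerivAt).differentiableAt.hasDerivAt
  have hPr : HasDerivAt (fun r' => φ t r') (pdr φ t r) r :=
    (sliceR hφd.hasFDerivAt).differentiableAt.hasDerivAt
  -- ## time-direction derivative
  have hF1 : HasDerivAt (fun t' => r ^ (a + 1) * Real.exp (2 * β t' r) *
      (Real.exp (-(α t' r + β t' r)) * pdt φ t' r * pdr φ t' r))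
      (r ^ (a + 1) * (Real.exp (2 * β t r) * (2 * pdt β t r)) *
          (Real.exp (-(α t r + β t r)) * pdt φ t r * pdr φ t r)
        + r ^ (a + 1) * Real.exp (2 * β t r) *
          ((Real.exp (-(α t r + β t r)) * -(pdt α t r + pdt β t r) * pdt φ t r
              + Real.exp (-(α t r + β t r)) * pdt (pdt φ) t r) * pdr φ t r
            + Real.exp (-(α t r + β t r)) * pdt φ t r * pdt (pdr φ) t r)) t := by
    have h1 : HasDerivAt (fun t' => r ^ (a + 1) * Real.exp (2 * β t' r))
        (r ^ (a + 1) * (Real.exp (2 * β t r) * (2 * pdt β t r))) t :=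
      ((hBt.const_mul 2).exp).const_mul (r ^ (a + 1))
    have h2 : HasDerivAt (fun t' => Real.exp (-(α t' r + β t' r)) * pdt φ t' r * pdr φ t' r)
        ((Real.exp (-(α t r + β t r)) * -(pdt α t r + pdt β t r) * pdt φ t r
            + Real.exp (-(α t r + β t r)) * pdt (pdt φ) t r) * pdr φ t r
          + Real.exp (-(α t r + β t r)) * pdt φ t r * pdt (pdr φ) t r) t :=
      (((hAt.add hBt).neg.exp.mul hPtT').mul hPrT')
    exact h1.mul h2
  have hD1 : pdt (fun t' r' => r' ^ (a + 1) * Real.exp (2 * β t' r') * mDen α β φ t' r') t r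
      = _ := hF1.deriv
  -- ## radial-direction derivative
  have hRw : HasDerivAt (fun r' : ℝ => r' ^ (a + 1)) ((a + 1) * r ^ a) r := by
    have h := Real.hasDerivAt_rpow_const (x := r) (p := a + 1) (Or.inl hr.ne')
    rwa [show a + 1 - 1 = a by ring] at h
  have hExpAB : HasDerivAt (fun r' => Real.exp (α t r' + β t r'))
      (Real.exp (α t r + β t r) * (pdr α t r + pdr β t r)) r := (hAr.add hBr).exp
  have hGc : HasDerivAt (fun r' => g (φ t r')) (deriv g (φ t r) * pdr φ t r) r := by
    have hg' : HasDerivAt g (deriv g (φ t r)) (φ t r) :=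
      ((hg.differentiable one_ne_zero) (φ t r)).hasDerivAt
    exact hg'.comp r hPr
  have h_a : HasDerivAt (fun r' => Real.exp (-(2 * α t r')) * (pdt φ t r') ^ 2)
      (Real.exp (-(2 * α t r)) * -(2 * pdr α t r) * (pdt φ t r) ^ 2
        + Real.exp (-(2 * α t r)) * ((2 : ℕ) * pdt φ t r ^ 1 * pdr (pdt φ) t r)) r :=
    ((hAr.const_mul 2).neg.exp).mul (hPtR'.pow 2)
  have h_b : HasDerivAt (fun r' => Real.exp (-(2 * β t r')) * (pdr φ t r') ^ 2)
      (Real.exp (-(2 * β t r)) * -(2 * pdr β t r) * (pdr φ t r) ^ 2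
        + Real.exp (-(2 * β t r)) * ((2 : ℕ) * pdr φ t r ^ 1 * pdr (pdr φ) t r)) r :=
    ((hBr.const_mul 2).neg.exp).mul (hPrR'.pow 2)
  have h_c : HasDerivAt (fun r' => (g (φ t r')) ^ 2 / r' ^ 2)
      (((2 : ℕ) * g (φ t r) ^ 1 * (deriv g (φ t r) * pdr φ t r) * r ^ 2
          - (g (φ t r)) ^ 2 * ((2 : ℕ) * r ^ 1)) / (r ^ 2) ^ 2) r :=
    (hGc.pow 2).div (hasDerivAt_pow 2 r) (pow_ne_zero 2 hr.ne')
  have hS := (((h_a.add h_b).add h_c).const_mul ((1 : ℝ) / 2)).sub h_c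
  have hF2 := (hRw.mul hExpAB).mul hS
  have hD2 : pdr (fun t' r' => r' ^ (a + 1) * Real.exp (α t' r' + β t' r')
      * (eDen g α β φ t' r' - fDen g φ t' r')) t r = _ := hF2.deriv
  rw [hD1, hD2]
  have e1 := hE1 t r hmem hr
  have e3 := hE3 t r hmem hr
  have h4 := hE4 t r hmem hr
  have h5 : Real.exp (-(2 * α t r)) *
      (pdt (pdt φ) t r + (pdt β t r - pdt α t r) * pdt φ t r)
      = Real.exp (-(2 * β t r)) * (pdr (pdr φ) t r + pdr φ t r / r
          + (pdr α t r - pdr β t r) * pdr φ t r)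
        - g (φ t r) * deriv g (φ t r) / r ^ 2 := by linarith
  have h6 := congrArg (fun z => Real.exp (2 * α t r) * z) h5
  rw [← mul_assoc, ← Real.exp_add, add_neg_cancel, Real.exp_zero, one_mul] at h6
  have hptt := eq_sub_of_add_eq h6
  rw [hsymm, hptt, e1, e3,
    show r ^ (a + 1) = r ^ a * r from Real.rpow_add_one hr.ne' a]
  have hra : r ^ a ≠ 0 := (Real.rpow_pos_of_pos hr a).ne'
  simp only [two_mul, Real.exp_add, Real.exp_neg, pow_one, Nat.cast_ofNat, Pi.add_apply, Pi.sub_apply, Pi.mul_apply, Real.rpow_add_one hr.ne' a]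
  field_simp
  ring

set_option maxHeartbeats 800000 in
/-- Divergence identity for the current `P_{R_a} = −e^{β−α} r^a 𝐦 ∂_t + r^a (𝐞 − 𝐟) ∂_r`:
given (E1)–(E4) on `U ∩ {r > 0}`, for every `a ∈ ℝ` and every point of `U` with `r > 0`,
`−∂_t(r^{a+1} e^{2β} 𝐦) + ∂_r(r^{a+1} e^{α+β}(𝐞−𝐟))
  = r^a e^{α+β} ( ((1+a)/2) e^{−2α} φ_t² + ((a−1)/2) e^{−2β} φ_r² + ((1−a)/2) g(φ)²/r² )`,
and in particular for `a = 1` the right-hand side equals `r e^{α+β} e^{−2α} φ_t²`. -/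
theorem Ra_current_divergence
    (κ : ℝ) (hκ : 0 < κ)
    (g : ℝ → ℝ) (hg : ContDiff ℝ 1 g)
    (U : Set (ℝ × ℝ)) (hU : IsOpen U)
    (α β φ : ℝ → ℝ → ℝ)
    (hα : ContDiffOn ℝ 2 (fun p : ℝ × ℝ => α p.1 p.2) U)
    (hβ : ContDiffOn ℝ 2 (fun p : ℝ × ℝ => β p.1 p.2) U)
    (hφ : ContDiffOn ℝ 2 (fun p : ℝ × ℝ => φ p.1 p.2) U)
    (hE1 : ∀ t r : ℝ, (t, r) ∈ U → 0 < r →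
      pdr β t r = (κ / 2) * r * exp (2 * β t r) *
        (exp (-(2 * α t r)) * (pdt φ t r) ^ 2 + exp (-(2 * β t r)) * (pdr φ t r) ^ 2
          + (g (φ t r)) ^ 2 / r ^ 2))
    (hE2 : ∀ t r : ℝ, (t, r) ∈ U → 0 < r →
      pdt β t r = κ * r * pdt φ t r * pdr φ t r)
    (hE3 : ∀ t r : ℝ, (t, r) ∈ U → 0 < r →
      pdr α t r = (κ / 2) * r * exp (2 * β t r) *
        (exp (-(2 * α t r)) * (pdt φ t r) ^ 2 + exp (-(2 * β t r)) * (pdr φ t r) ^ 2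
          - (g (φ t r)) ^ 2 / r ^ 2))
    (hE4 : ∀ t r : ℝ, (t, r) ∈ U → 0 < r →
      -(exp (-(2 * α t r)) * (pdt (pdt φ) t r + (pdt β t r - pdt α t r) * pdt φ t r))
        + exp (-(2 * β t r)) * (pdr (pdr φ) t r + pdr φ t r / r
            + (pdr α t r - pdr β t r) * pdr φ t r)
      = g (φ t r) * deriv g (φ t r) / r ^ 2) :
    (∀ a : ℝ, ∀ t r : ℝ, (t, r) ∈ U → 0 < r →
      -(pdt (fun t' r' => r' ^ (a + 1) * exp (2 * β t' r') * mDen α β φ t' r') t r)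
        + pdr (fun t' r' => r' ^ (a + 1) * exp (α t' r' + β t' r')
            * (eDen g α β φ t' r' - fDen g φ t' r')) t r
      = r ^ a * exp (α t r + β t r) *
          (((1 + a) / 2) * exp (-(2 * α t r)) * (pdt φ t r) ^ 2
            + ((a - 1) / 2) * exp (-(2 * β t r)) * (pdr φ t r) ^ 2
            + ((1 - a) / 2) * (g (φ t r)) ^ 2 / r ^ 2))
    ∧ (∀ t r : ℝ, (t, r) ∈ U → 0 < r →
      -(pdt (fun t' r' => r' ^ ((1:ℝ) + 1) * exp (2 * β t' r') * mDen α β φ t' r') t r)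
        + pdr (fun t' r' => r' ^ ((1:ℝ) + 1) * exp (α t' r' + β t' r')
            * (eDen g α β φ t' r' - fDen g φ t' r')) t r
      = r * exp (α t r + β t r) * (exp (-(2 * α t r)) * (pdt φ t r) ^ 2)) := by
  constructor
  · exact fun a t r hmem hr => main_calc κ g hg U hU α β φ hα hβ hφ hE1 hE3 hE4 a t r hmem hr
  · intro t r hmem hr
    have h := main_calc κ g hg U hU α β φ hα hβ hφ hE1 hE3 hE4 1 t r hmem hr
    rw [h, Real.rpow_one]
    ring_nf
end

section
/- Suppose that only the wave equation (E4) holds on U ∩ {r > 0}. Set Tφ := e^{−α}∂_tφ, Rφ := e^{−β}∂_rφ, L₀ := (1/2)( −(Tφ)² + (Rφ)² + 𝐟 ) − 2 g(φ) g′(φ) ∂_rφ / r, and L := (r e^{α} ∂_rα / 2)( (Tφ)² + (Rφ)² − 𝐟 ) + e^{α} L₀ − r (∂_tβ) e^{β} 𝐦. Then at every point of U with r > 0: ∂_t( r e^{β} 𝐦 ) − ∂_r( r e^{α} 𝐞 ) = L. -/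
open Real

/-- `Tφ = e^{−α} ∂_t φ`. -/
noncomputable def Tphi (α φ : ℝ → ℝ → ℝ) (t r : ℝ) : ℝ := exp (-(α t r)) * pdt φ t r

/-- `Rφ = e^{−β} ∂_r φ`. -/
noncomputable def Rphi (β φ : ℝ → ℝ → ℝ) (t r : ℝ) : ℝ := exp (-(β t r)) * pdr φ t r

/-- `L₀ = (1/2)(−(Tφ)² + (Rφ)² + 𝐟) − 2 g(φ) g′(φ) ∂_r φ / r`. -/
noncomputable def L0 (g : ℝ → ℝ) (α β φ : ℝ → ℝ → ℝ) (t r : ℝ) : ℝ :=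
  (1 / 2) * (-(Tphi α φ t r) ^ 2 + (Rphi β φ t r) ^ 2 + (g (φ t r)) ^ 2 / r ^ 2)
    - 2 * g (φ t r) * deriv g (φ t r) * pdr φ t r / r

private lemma diffAt_t {U : Set (ℝ × ℝ)} {t r : ℝ} (f : ℝ → ℝ → ℝ)
    (hf : ContDiffOn ℝ 1 (fun p : ℝ × ℝ => f p.1 p.2) U)
    (hU : IsOpen U) (hp : (t, r) ∈ U) : DifferentiableAt ℝ (fun t' => f t' r) t := by
  have hF : DifferentiableAt ℝ (fun p : ℝ × ℝ => f p.1 p.2) (t, r) :=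
    (hf.contDiffAt (hU.mem_nhds hp)).differentiableAt one_ne_zero
  have hline : DifferentiableAt ℝ (fun t' : ℝ => ((t', r) : ℝ × ℝ)) t :=
    differentiableAt_id.prodMk (differentiableAt_const r)
  exact hF.comp t hline

private lemma diffAt_r {U : Set (ℝ × ℝ)} {t r : ℝ} (f : ℝ → ℝ → ℝ)
    (hf : ContDiffOn ℝ 1 (fun p : ℝ × ℝ => f p.1 p.2) U)
    (hU : IsOpen U) (hp : (t, r) ∈ U) : DifferentiableAt ℝ (fun r' => f t r') r := by
  have hF : DifferentiableAt ℝ (fun p : ℝ × ℝ => f p.1 p.2) (t, r) :=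
    (hf.contDiffAt (hU.mem_nhds hp)).differentiableAt one_ne_zero
  have hline : DifferentiableAt ℝ (fun r' : ℝ => ((t, r') : ℝ × ℝ)) r :=
    (differentiableAt_const t).prodMk differentiableAt_id
  exact hF.comp r hline

private lemma second_stuff {U : Set (ℝ × ℝ)} {t r : ℝ} (φ : ℝ → ℝ → ℝ)
    (hφ : ContDiffOn ℝ 2 (fun p : ℝ × ℝ => φ p.1 p.2) U)
    (hU : IsOpen U) (hp : (t, r) ∈ U) :
    DifferentiableAt ℝ (fun t' => pdt φ t' r) t ∧ DifferentiableAt ℝ (fun t' => pdr φ t' r) t ∧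
    DifferentiableAt ℝ (fun r' => pdt φ t r') r ∧ DifferentiableAt ℝ (fun r' => pdr φ t r') r ∧
    pdt (pdr φ) t r = pdr (pdt φ) t r := by
  set F : ℝ × ℝ → ℝ := fun p => φ p.1 p.2 with hFdef
  set F' : ℝ × ℝ → (ℝ × ℝ) →L[ℝ] ℝ := fderiv ℝ F with hF'def
  have hF' : ContDiffOn ℝ 1 F' U := hφ.fderiv_of_isOpen hU (by norm_num)
  have hlinet : ∀ r' : ℝ, ∀ s : ℝ, HasDerivAt (fun t' : ℝ => ((t', r') : ℝ × ℝ)) (1, 0) s :=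
    fun r' s => (hasDerivAt_id s).prodMk (hasDerivAt_const s r')
  have hliner : ∀ t' : ℝ, ∀ s : ℝ, HasDerivAt (fun r' : ℝ => ((t', r') : ℝ × ℝ)) (0, 1) s :=
    fun t' s => (hasDerivAt_const s t').prodMk (hasDerivAt_id s)
  have key_t : ∀ p ∈ U, pdt φ p.1 p.2 = F' p (1, 0) := by
    intro p hpU
    have hFd : DifferentiableAt ℝ F p :=
      (hφ.contDiffAt (hU.mem_nhds hpU)).differentiableAt two_ne_zero
    have h1 : HasDerivAt (fun s => φ s p.2) (F' p (1, 0)) p.1 := by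
      have := hFd.hasFDerivAt.comp_hasDerivAt p.1 (hlinet p.2 p.1)
      simpa [Function.comp_def] using this
    rw [pdt]; exact h1.deriv
  have key_r : ∀ p ∈ U, pdr φ p.1 p.2 = F' p (0, 1) := by
    intro p hpU
    have hFd : DifferentiableAt ℝ F p :=
      (hφ.contDiffAt (hU.mem_nhds hpU)).differentiableAt two_ne_zero
    have h1 : HasDerivAt (fun s => φ p.1 s) (F' p (0, 1)) p.2 := by
      have := hFd.hasFDerivAt.comp_hasDerivAt p.2 (hliner p.1 p.2)
      simpa [Function.comp_def] using this
    rw [pdr]; exact h1.deriv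
  have hnt : ∀ᶠ t' in nhds t, ((t', r) : ℝ × ℝ) ∈ U := by
    have hc : Continuous fun t' : ℝ => ((t', r) : ℝ × ℝ) := continuous_id.prodMk continuous_const
    exact hc.continuousAt.preimage_mem_nhds (hU.mem_nhds hp)
  have hnr : ∀ᶠ r' in nhds r, ((t, r') : ℝ × ℝ) ∈ U := by
    have hc : Continuous fun r' : ℝ => ((t, r') : ℝ × ℝ) := continuous_const.prodMk continuous_id
    exact hc.continuousAt.preimage_mem_nhds (hU.mem_nhds hp)
  have hev_tt : (fun t' => pdt φ t' r) =ᶠ[nhds t] fun t' => F' (t', r) (1, 0) := by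
    filter_upwards [hnt] with t' h using key_t (t', r) h
  have hev_tr : (fun t' => pdr φ t' r) =ᶠ[nhds t] fun t' => F' (t', r) (0, 1) := by
    filter_upwards [hnt] with t' h using key_r (t', r) h
  have hev_rt : (fun r' => pdt φ t r') =ᶠ[nhds r] fun r' => F' (t, r') (1, 0) := by
    filter_upwards [hnr] with r' h using key_t (t, r') h
  have hev_rr : (fun r' => pdr φ t r') =ᶠ[nhds r] fun r' => F' (t, r') (0, 1) := by
    filter_upwards [hnr] with r' h using key_r (t, r') h
  have hF'd : DifferentiableAt ℝ F' (t, r) :=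
    (hF'.contDiffAt (hU.mem_nhds hp)).differentiableAt one_ne_zero
  have hcurve_t : HasDerivAt (fun t' => F' (t', r)) (fderiv ℝ F' (t, r) (1, 0)) t := by
    have := hF'd.hasFDerivAt.comp_hasDerivAt t (hlinet r t)
    simpa [Function.comp_def] using this
  have hcurve_r : HasDerivAt (fun r' => F' (t, r')) (fderiv ℝ F' (t, r) (0, 1)) r := by
    have := hF'd.hasFDerivAt.comp_hasDerivAt r (hliner t r)
    simpa [Function.comp_def] using this
  have h_tt : HasDerivAt (fun t' => F' (t', r) (1, 0)) (fderiv ℝ F' (t, r) (1, 0) (1, 0)) t := by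
    simpa using hcurve_t.clm_apply (hasDerivAt_const t ((1 : ℝ), (0 : ℝ)))
  have h_tr : HasDerivAt (fun t' => F' (t', r) (0, 1)) (fderiv ℝ F' (t, r) (1, 0) (0, 1)) t := by
    simpa using hcurve_t.clm_apply (hasDerivAt_const t ((0 : ℝ), (1 : ℝ)))
  have h_rt : HasDerivAt (fun r' => F' (t, r') (1, 0)) (fderiv ℝ F' (t, r) (0, 1) (1, 0)) r := by
    simpa using hcurve_r.clm_apply (hasDerivAt_const r ((1 : ℝ), (0 : ℝ)))
  have h_rr : HasDerivAt (fun r' => F' (t, r') (0, 1)) (fderiv ℝ F' (t, r) (0, 1) (0, 1)) r := by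
    simpa using hcurve_r.clm_apply (hasDerivAt_const r ((0 : ℝ), (1 : ℝ)))
  have hsym : IsSymmSndFDerivAt ℝ F (t, r) :=
    (hφ.contDiffAt (hU.mem_nhds hp)).isSymmSndFDerivAt (by simp)
  refine ⟨hev_tt.differentiableAt_iff.mpr h_tt.differentiableAt,
    hev_tr.differentiableAt_iff.mpr h_tr.differentiableAt,
    hev_rt.differentiableAt_iff.mpr h_rt.differentiableAt,
    hev_rr.differentiableAt_iff.mpr h_rr.differentiableAt, ?_⟩
  have e1 : pdt (pdr φ) t r = fderiv ℝ F' (t, r) (1, 0) (0, 1) := by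
    have h : deriv (fun t' => pdr φ t' r) t = deriv (fun t' => F' (t', r) (0, 1)) t :=
      hev_tr.deriv_eq
    rw [pdt, h, h_tr.deriv]
  have e2 : pdr (pdt φ) t r = fderiv ℝ F' (t, r) (0, 1) (1, 0) := by
    have h : deriv (fun r' => pdt φ t r') r = deriv (fun r' => F' (t, r') (1, 0)) r :=
      hev_rt.deriv_eq
    rw [pdr, h, h_rt.deriv]
  rw [e1, e2]
  exact hsym (1, 0) (0, 1)

/-- If only the wave equation (E4) holds on `U ∩ {r > 0}`, then at every point of `U` with
`r > 0` one has `∂_t(r e^β 𝐦) − ∂_r(r e^α 𝐞) = L`, where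
`L = (r e^α ∂_r α / 2)((Tφ)² + (Rφ)² − 𝐟) + e^α L₀ − r (∂_t β) e^β 𝐦`. -/
theorem radial_current_identity
    (κ : ℝ) (hκ : 0 < κ)
    (g : ℝ → ℝ) (hg : ContDiff ℝ 1 g)
    (U : Set (ℝ × ℝ)) (hU : IsOpen U)
    (α β φ : ℝ → ℝ → ℝ)
    (hα : ContDiffOn ℝ 2 (fun p : ℝ × ℝ => α p.1 p.2) U)
    (hβ : ContDiffOn ℝ 2 (fun p : ℝ × ℝ => β p.1 p.2) U)
    (hφ : ContDiffOn ℝ 2 (fun p : ℝ × ℝ => φ p.1 p.2) U)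
    (hE4 : ∀ t r : ℝ, (t, r) ∈ U → 0 < r →
      -(exp (-(2 * α t r)) * (pdt (pdt φ) t r + (pdt β t r - pdt α t r) * pdt φ t r))
        + exp (-(2 * β t r)) * (pdr (pdr φ) t r + pdr φ t r / r
            + (pdr α t r - pdr β t r) * pdr φ t r)
      = g (φ t r) * deriv g (φ t r) / r ^ 2) :
    ∀ t r : ℝ, (t, r) ∈ U → 0 < r →
      pdt (fun t' r' => r' * exp (β t' r') * mDen α β φ t' r') t r
        - pdr (fun t' r' => r' * exp (α t' r') * eDen g α β φ t' r') t r
      = (r * exp (α t r) * pdr α t r / 2) *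
          ((Tphi α φ t r) ^ 2 + (Rphi β φ t r) ^ 2 - (g (φ t r)) ^ 2 / r ^ 2)
        + exp (α t r) * L0 g α β φ t r
        - r * pdt β t r * exp (β t r) * mDen α β φ t r := by
  intro t r hp hr
  have hα1 := hα.of_le one_le_two
  have hβ1 := hβ.of_le one_le_two
  have hφ1 := hφ.of_le one_le_two
  obtain ⟨hd_tt, hd_tr, hd_rt, hd_rr, hsym⟩ := second_stuff φ hφ hU hp
  have hαt : HasDerivAt (fun t' => α t' r) (pdt α t r) t := by
    simpa [pdt] using (diffAt_t α hα1 hU hp).hasDerivAt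
  have hβt : HasDerivAt (fun t' => β t' r) (pdt β t r) t := by
    simpa [pdt] using (diffAt_t β hβ1 hU hp).hasDerivAt
  have hαr : HasDerivAt (fun r' => α t r') (pdr α t r) r := by
    simpa [pdr] using (diffAt_r α hα1 hU hp).hasDerivAt
  have hβr : HasDerivAt (fun r' => β t r') (pdr β t r) r := by
    simpa [pdr] using (diffAt_r β hβ1 hU hp).hasDerivAt
  have hφtt : HasDerivAt (fun t' => pdt φ t' r) (pdt (pdt φ) t r) t := by
    simpa [pdt] using hd_tt.hasDerivAt
  have hφtr : HasDerivAt (fun t' => pdr φ t' r) (pdt (pdr φ) t r) t := by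
    simpa [pdt] using hd_tr.hasDerivAt
  have hφrt : HasDerivAt (fun r' => pdt φ t r') (pdr (pdt φ) t r) r := by
    simpa [pdr] using hd_rt.hasDerivAt
  have hφrr : HasDerivAt (fun r' => pdr φ t r') (pdr (pdr φ) t r) r := by
    simpa [pdr] using hd_rr.hasDerivAt
  have hφr0 : HasDerivAt (fun r' => φ t r') (pdr φ t r) r := by
    simpa [pdr] using (diffAt_r φ hφ1 hU hp).hasDerivAt
  have hgφ : HasDerivAt (fun r' => g (φ t r')) (deriv g (φ t r) * pdr φ t r) r := by
    have hg' : HasDerivAt g (deriv g (φ t r)) (φ t r) :=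
      ((hg.differentiable one_ne_zero) (φ t r)).hasDerivAt
    simpa [Function.comp_def] using hg'.comp r hφr0
  -- t-derivative of r e^β m
  have hmT := (hβt.exp.const_mul r).fun_mul (((hαt.fun_add hβt).fun_neg.exp.fun_mul hφtt).fun_mul hφtr)
  have eT : pdt (fun t' r' => r' * exp (β t' r') * mDen α β φ t' r') t r
      = deriv (fun t' => r * exp (β t' r)
          * (exp (-(α t' r + β t' r)) * pdt φ t' r * pdr φ t' r)) t := by
    simp only [pdt, mDen]
  -- r-derivative of r e^α e
  have q1 := (hasDerivAt_id' r).fun_mul hαr.exp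
  have s1 := ((hαr.const_mul (2:ℝ)).fun_neg.exp).fun_mul (hφrt.fun_pow 2)
  have s2 := ((hβr.const_mul (2:ℝ)).fun_neg.exp).fun_mul (hφrr.fun_pow 2)
  have s3 := (hgφ.fun_pow 2).fun_div (hasDerivAt_pow 2 r) (pow_ne_zero 2 hr.ne')
  have hmR := q1.fun_mul (((s1.fun_add s2).fun_add s3).const_mul (1/2 : ℝ))
  have eR : pdr (fun t' r' => r' * exp (α t' r') * eDen g α β φ t' r') t r
      = deriv (fun r' => r' * exp (α t r') * ((1/2 : ℝ) * (exp (-(2 * α t r')) * pdt φ t r' ^ 2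
          + exp (-(2 * β t r')) * pdr φ t r' ^ 2 + g (φ t r') ^ 2 / r' ^ 2))) r := by
    simp only [pdr, pdt, eDen]
  rw [eT, hmT.deriv, eR, hmR.deriv]
  simp only [Tphi, Rphi, L0, mDen]
  rw [hsym]
  have hE := hE4 t r hp hr
  have hA : Real.exp (α t r) ≠ 0 := (exp_pos _).ne'
  have hB : Real.exp (β t r) ≠ 0 := (exp_pos _).ne'
  have hr0 : r ≠ 0 := hr.ne'
  simp only [Real.exp_neg, two_mul, Real.exp_add] at hE ⊢
  field_simp at hE ⊢
  linear_combination (-(2 * r^2 * pdr φ t r)) * hE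
end

section
/- Let g : ℝ → ℝ be C¹, odd, with g′(0) = 1 and g(s) > 0 for every s > 0 (as holds under the Grillakis condition s g′(s) + g(s) > 0 for s > 0). Then there exist ε₀ > 0 and C > 0, depending only on g, with the following property: for every 0 < ε ≤ ε₀, all reals a < b, every C¹ function φ : [a,b] → [0,∞) with φ(b) = 0, and every continuous ρ : [a,b) → (0,∞), if (as improper integrals) ∫_a^b φ′(s)² ρ(s) ds ≤ ε and ∫_a^b g(φ(s))²/ρ(s) ds ≤ ε, then φ(x) ≤ C√ε for every x ∈ [a,b]. -/
open Real MeasureTheory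

/-- Small-flux pointwise bound: under the Grillakis-type assumptions on `g`, there exist
`ε₀ > 0` and `C > 0`, depending only on `g`, such that whenever `0 < ε ≤ ε₀` and a
nonnegative C¹ profile `φ` on `[a,b]` vanishes at `b` and has both flux integrals bounded
by `ε` (with positive continuous weight `ρ` on `[a,b)`), one has `φ ≤ C√ε` on `[a,b]`. -/
theorem small_flux_pointwise_bound
    (g : ℝ → ℝ) (hg : ContDiff ℝ 1 g)
    (hodd : ∀ s : ℝ, g (-s) = -g s)
    (hg0 : deriv g 0 = 1)
    (hgpos : ∀ s : ℝ, 0 < s → 0 < g s) :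
    ∃ ε₀ > (0:ℝ), ∃ C > (0:ℝ),
      ∀ ε : ℝ, 0 < ε → ε ≤ ε₀ →
      ∀ a b : ℝ, a < b →
      ∀ φ ρ : ℝ → ℝ,
        ContDiffOn ℝ 1 φ (Set.Icc a b) →
        (∀ x ∈ Set.Icc a b, 0 ≤ φ x) →
        φ b = 0 →
        ContinuousOn ρ (Set.Ico a b) →
        (∀ x ∈ Set.Ico a b, 0 < ρ x) →
        IntegrableOn (fun s => (deriv φ s) ^ 2 * ρ s) (Set.Ioo a b) →
        (∫ s in Set.Ioo a b, (deriv φ s) ^ 2 * ρ s) ≤ ε →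
        IntegrableOn (fun s => (g (φ s)) ^ 2 / ρ s) (Set.Ioo a b) →
        (∫ s in Set.Ioo a b, (g (φ s)) ^ 2 / ρ s) ≤ ε →
        ∀ x ∈ Set.Icc a b, φ x ≤ C * Real.sqrt ε := by
  have hgc : Continuous g := hg.continuous
  have hg00 : g 0 = 0 := by have := hodd 0; simp at this; linarith
  have hgnn : ∀ s : ℝ, 0 ≤ s → 0 ≤ g s := by
    intro s hs
    rcases hs.eq_or_lt with h | h
    · simp [← h, hg00]
    · exact (hgpos s h).le
  -- continuity of deriv g at 0 gives δ with deriv g ≥ 1/2 on [−δ,δ]... we need [0,δ]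
  have hdc : Continuous (deriv g) := hg.continuous_deriv le_rfl
  obtain ⟨δ, hδpos, hδ⟩ : ∃ δ > (0:ℝ), ∀ t : ℝ, |t| ≤ δ → (1:ℝ)/2 ≤ deriv g t := by
    have hca : ContinuousAt (deriv g) 0 := hdc.continuousAt
    obtain ⟨d, hd, hball⟩ := Metric.continuousAt_iff.1 hca (1/2) (by norm_num)
    refine ⟨d/2, by linarith, fun t ht => ?_⟩
    have : dist t 0 < d := by
      simp only [Real.dist_eq, sub_zero]; linarith
    have := hball this
    rw [Real.dist_eq, hg0] at this
    have := abs_lt.1 this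
    linarith [this.1]
  -- g y ≥ y/2 on [0, δ]
  have hglb : ∀ y : ℝ, 0 ≤ y → y ≤ δ → y / 2 ≤ g y := by
    intro y hy hyδ
    have hftc : ∫ t in (0:ℝ)..y, deriv g t = g y - g 0 :=
      intervalIntegral.integral_deriv_eq_sub (fun t _ => hg.differentiable one_ne_zero t)
        (hdc.intervalIntegrable _ _)
    have hmono : ∫ t in (0:ℝ)..y, (1:ℝ)/2 ≤ ∫ t in (0:ℝ)..y, deriv g t := by
      apply intervalIntegral.integral_mono_on hy
        (intervalIntegrable_const) (hdc.intervalIntegrable _ _)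
      intro t ht
      exact hδ t (by rw [abs_le]; constructor <;> [linarith [ht.1]; linarith [ht.2]])
    simp only [intervalIntegral.integral_const, smul_eq_mul, sub_zero] at hmono
    rw [hftc, hg00, sub_zero] at hmono
    linarith
  set P : ℝ → ℝ := fun y => ∫ t in (0:ℝ)..y, g t with hP
  have hPderiv : ∀ y : ℝ, HasDerivAt P (g y) y := fun y =>
    intervalIntegral.integral_hasDerivAt_right (hgc.intervalIntegrable 0 y)
      (hgc.stronglyMeasurableAtFilter _ _) hgc.continuousAt
  -- P y ≥ y^2/4 on [0,δ]
  have hPlb : ∀ y : ℝ, 0 ≤ y → y ≤ δ → y ^ 2 / 4 ≤ P y := by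
    intro y hy hyδ
    have hmono : ∫ t in (0:ℝ)..y, t / 2 ≤ ∫ t in (0:ℝ)..y, g t := by
      apply intervalIntegral.integral_mono_on hy
        ((continuous_id.div_const 2).intervalIntegrable _ _) (hgc.intervalIntegrable _ _)
      intro t ht
      exact hglb t ht.1 (le_trans ht.2 hyδ)
    have : ∫ t in (0:ℝ)..y, t / 2 = y ^ 2 / 4 := by
      simp only [intervalIntegral.integral_div, integral_id]
      ring
    linarith [hmono, this.symm.le]
  -- P monotone on [0,∞)
  have hPmono : ∀ u v : ℝ, 0 ≤ u → u ≤ v → P u ≤ P v := by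
    intro u v hu huv
    have hsplit : (∫ t in (0:ℝ)..u, g t) + ∫ t in u..v, g t = ∫ t in (0:ℝ)..v, g t :=
      intervalIntegral.integral_add_adjacent_intervals (hgc.intervalIntegrable _ _)
        (hgc.intervalIntegrable _ _)
    have hnn : 0 ≤ ∫ t in u..v, g t :=
      intervalIntegral.integral_nonneg huv (fun t ht => hgnn t (le_trans hu ht.1))
    simp only [hP]
    linarith [hsplit]
  have hPδpos : 0 < P δ := lt_of_lt_of_le (by positivity) (hPlb δ hδpos.le le_rfl)
  refine ⟨P δ / 2, by positivity, 2, by norm_num, ?_⟩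
  intro ε hε hεε₀ a b hab φ ρ hφ hφnn hφb hρc hρpos hI1 hI1le hI2 hI2le x hx
  have hsqrt : (0:ℝ) < Real.sqrt ε := Real.sqrt_pos.2 hε
  rcases eq_or_lt_of_le hx.2 with hxb | hxb
  · rw [hxb, hφb]; positivity
  -- key: P (φ x) ≤ ε
  have hφcont : ContinuousOn φ (Set.Icc a b) := hφ.continuousOn
  have hφderiv : ∀ s ∈ Set.Ioo a b, HasDerivAt φ (deriv φ s) s := by
    intro s hs
    have hmem : Set.Icc a b ∈ nhds s := Icc_mem_nhds hs.1 hs.2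
    exact ((hφ.differentiableOn one_ne_zero).differentiableAt hmem).hasDerivAt
  set f' : ℝ → ℝ := fun s => g (φ s) * deriv φ s with hf'
  set h : ℝ → ℝ := fun s => (1:ℝ)/2 * ((deriv φ s) ^ 2 * ρ s + (g (φ s)) ^ 2 / ρ s) with hh
  have hhint : IntegrableOn h (Set.Ioo a b) := ((hI1.add hI2).const_mul _)
  have hptwise : ∀ s ∈ Set.Ioo a b, |f' s| ≤ h s := by
    intro s hs
    have hρs : 0 < ρ s := hρpos s ⟨hs.1.le, hs.2⟩
    set u := deriv φ s
    set v := g (φ s)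
    have key : 2 * (|v| * |u|) * ρ s ≤ u ^ 2 * (ρ s) ^ 2 + v ^ 2 := by
      nlinarith [sq_nonneg (|u| * ρ s - |v|), sq_abs u, sq_abs v, abs_nonneg u, abs_nonneg v]
    have habs : |v * u| = |v| * |u| := abs_mul v u
    have hdivge : 2 * (|v| * |u|) - u ^ 2 * ρ s ≤ v ^ 2 / ρ s := by
      rw [le_div_iff₀ hρs]; nlinarith [key]
    show |v * u| ≤ (1:ℝ)/2 * (u ^ 2 * ρ s + v ^ 2 / ρ s)
    rw [habs]; linarith
  have hf'meas : AEStronglyMeasurable f' (volume.restrict (Set.Ioo a b)) := by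
    apply AEStronglyMeasurable.mul
    · exact ((hgc.comp_continuousOn (hφcont.mono Set.Ioo_subset_Icc_self)).aestronglyMeasurable
        measurableSet_Ioo)
    · exact (measurable_deriv φ).aestronglyMeasurable
  have hf'int : IntegrableOn f' (Set.Ioo a b) := by
    apply Integrable.mono' hhint hf'meas
    filter_upwards [ae_restrict_mem measurableSet_Ioo] with s hs
    simpa using hptwise s hs
  -- FTC on [x, b]
  have hsubIcc : Set.Icc x b ⊆ Set.Icc a b := Set.Icc_subset_Icc hx.1 le_rfl
  have hsubIoo : Set.Ioo x b ⊆ Set.Ioo a b := Set.Ioo_subset_Ioo hx.1 le_rfl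
  have hf'ii : IntervalIntegrable f' volume x b := by
    rw [intervalIntegrable_iff_integrableOn_Ioc_of_le hxb.le]
    exact ((hf'int.mono_set hsubIoo).congr_set_ae Ioo_ae_eq_Ioc.symm)
  have hPcont : Continuous P := by
    have hPd : Differentiable ℝ P := fun y => (hPderiv y).differentiableAt
    exact hPd.continuous
  have hcomp : ∀ s ∈ Set.Ioo x b, HasDerivWithinAt (P ∘ φ) (f' s) (Set.Ioi s) s := by
    intro s hs
    exact ((hPderiv (φ s)).comp s (hφderiv s (hsubIoo hs))).hasDerivWithinAt
  have hftc : ∫ s in x..b, f' s = (P ∘ φ) b - (P ∘ φ) x :=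
    intervalIntegral.integral_eq_sub_of_hasDeriv_right_of_le hxb.le
      (hPcont.comp_continuousOn (hφcont.mono hsubIcc))
      hcomp hf'ii
  have hPφb : (P ∘ φ) b = 0 := by
    simp only [Function.comp_apply, hφb, hP, intervalIntegral.integral_same]
  have habs : |∫ s in x..b, f' s| ≤ ∫ s in x..b, |f' s| :=
    intervalIntegral.abs_integral_le_integral_abs hxb.le
  have e1 : ∫ s in x..b, |f' s| = ∫ s in Set.Ioo x b, |f' s| := by
    rw [intervalIntegral.integral_of_le hxb.le, integral_Ioc_eq_integral_Ioo]
  have mono1 : ∫ s in Set.Ioo x b, |f' s| ≤ ∫ s in Set.Ioo x b, h s :=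
    setIntegral_mono_on (hf'int.mono_set hsubIoo).abs (hhint.mono_set hsubIoo)
      measurableSet_Ioo (fun s hs => hptwise s (hsubIoo hs))
  have hhnn : 0 ≤ᵐ[volume.restrict (Set.Ioo a b)] h := by
    filter_upwards [ae_restrict_mem measurableSet_Ioo] with s hs
    have hρs : 0 < ρ s := hρpos s ⟨hs.1.le, hs.2⟩
    have h1 : (0:ℝ) ≤ (deriv φ s) ^ 2 * ρ s := by positivity
    have h2 : (0:ℝ) ≤ (g (φ s)) ^ 2 / ρ s := by positivity
    simp only [Pi.zero_apply, hh]; linarith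
  have mono2 : ∫ s in Set.Ioo x b, h s ≤ ∫ s in Set.Ioo a b, h s :=
    setIntegral_mono_set hhint hhnn (HasSubset.Subset.eventuallyLE hsubIoo)
  have heq : ∫ s in Set.Ioo a b, h s
      = 1/2 * ((∫ s in Set.Ioo a b, (deriv φ s) ^ 2 * ρ s)
        + ∫ s in Set.Ioo a b, (g (φ s)) ^ 2 / ρ s) := by
    simp only [hh]
    rw [integral_const_mul, integral_add hI1 hI2]
  have hPφx : P (φ x) ≤ ε := by
    have hval : ∫ s in x..b, f' s = -(P (φ x)) := by
      rw [hftc, hPφb]; simp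
    have : P (φ x) ≤ |∫ s in x..b, f' s| := by
      rw [hval, abs_neg]; exact le_abs_self _
    calc P (φ x) ≤ |∫ s in x..b, f' s| := this
      _ ≤ ∫ s in x..b, |f' s| := habs
      _ = ∫ s in Set.Ioo x b, |f' s| := e1
      _ ≤ ∫ s in Set.Ioo x b, h s := mono1
      _ ≤ ∫ s in Set.Ioo a b, h s := mono2
      _ = 1/2 * (_ + _) := heq
      _ ≤ 1/2 * (ε + ε) := by gcongr
      _ = ε := by ring
  have hφxnn : 0 ≤ φ x := hφnn x hx
  have hφxδ : φ x ≤ δ := by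
    by_contra hcon
    push_neg at hcon
    have := hPmono δ (φ x) hδpos.le hcon.le
    linarith
  have hsq : (φ x) ^ 2 / 4 ≤ ε := le_trans (hPlb _ hφxnn hφxδ) hPφx
  have h4 : (2 * Real.sqrt ε) ^ 2 = 4 * ε := by
    rw [mul_pow, Real.sq_sqrt hε.le]; ring
  nlinarith [hsq, h4, hsqrt, hφxnn]
end
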